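/- arXiv:1410.1618 — 9 statements merged into one kernel-verified Lean document; each statement's English description precedes it below -/
import Mathlib

section
/- Let Σ be a subset of the vertex set of a finite simplicial graph Γ, and let x ∈ A_Γ be such that x ∈ y⁻¹ A_Σ y for some y ∈ A_Γ. Then every cyclically reduced word whose value in A_Γ is conjugate to x is a word in the alphabet Σ; in particular, its value lies in A_Σ. -/
/-- The link of a set of vertices: vertices adjacent to every vertex of `Δ`
(with `lkSet G ∅ = Set.univ`). -/
def lkSet {V : Type*} (G : SimpleGraph V) (Δ : Set V) : Set V :=
  {u | ∀ v ∈ Δ, G.Adj v u}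

/-- The star of a set of vertices. -/
def stSet {V : Type*} (G : SimpleGraph V) (Δ : Set V) : Set V :=
  Δ ∪ lkSet G Δ

/-- The extended star of a set of vertices. -/
def estSet {V : Type*} (G : SimpleGraph V) (Δ : Set V) : Set V :=
  lkSet G Δ ∪ lkSet G (lkSet G Δ)

/-- A set of vertices is a cone if some vertex of it is adjacent to all the others. -/
def IsCone {V : Type*} (G : SimpleGraph V) (Θ : Set V) : Prop :=
  ∃ a ∈ Θ, ∀ u ∈ Θ, u ≠ a → G.Adj a u

open scoped commutatorElement

/-- Defining relations of the right-angled Artin group of `G`: commutators of adjacent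
generators. -/
def raagRels {V : Type*} (G : SimpleGraph V) : Set (FreeGroup V) :=
  {r | ∃ u v : V, G.Adj u v ∧ r = ⁅FreeGroup.of u, FreeGroup.of v⁆}

/-- The right-angled Artin group on the graph `G`. -/
abbrev RAAG {V : Type*} (G : SimpleGraph V) : Type _ :=
  PresentedGroup (raagRels G)

/-- The generator of `RAAG G` corresponding to a vertex. -/
def raagGen {V : Type*} (G : SimpleGraph V) (v : V) : RAAG G :=
  PresentedGroup.of v

/-- The special subgroup `A_Δ` of `RAAG G` generated by the vertices of `Δ`. -/
def raagSub {V : Type*} (G : SimpleGraph V) (Δ : Set V) : Subgroup (RAAG G) :=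
  Subgroup.closure (raagGen G '' Δ)

/-- A word in the alphabet of vertices: a letter is a vertex together with a sign
(`true` for the generator, `false` for its inverse). -/
abbrev RaagWord (V : Type*) := List (V × Bool)

/-- The value of a word in the right-angled Artin group. -/
def wordValue {V : Type*} (G : SimpleGraph V) (w : RaagWord V) : RAAG G :=
  (w.map fun p => if p.2 then raagGen G p.1 else (raagGen G p.1)⁻¹).prod

/-- Two letters commute iff their vertices are equal or adjacent. -/
def lettersCommute {V : Type*} (G : SimpleGraph V) (u v : V) : Prop :=
  u = v ∨ G.Adj u v

/-- The word `w` admits a reduction: two letters at positions `i < j` carry the same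
vertex with opposite signs, and every letter strictly between them commutes with the
deleted letter. -/
def HasReduction {V : Type*} (G : SimpleGraph V) (w : RaagWord V) : Prop :=
  ∃ (i j : ℕ) (hi : i < w.length) (hj : j < w.length), i < j ∧
    (w.get ⟨i, hi⟩).1 = (w.get ⟨j, hj⟩).1 ∧
    (w.get ⟨i, hi⟩).2 = !(w.get ⟨j, hj⟩).2 ∧
    ∀ (k : ℕ) (hk : k < w.length), i < k → k < j →
      lettersCommute G (w.get ⟨k, hk⟩).1 (w.get ⟨i, hi⟩).1

/-- The word `w` admits a cyclic reduction: two letters at positions `i < j` carry the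
same vertex with opposite signs, and every letter before position `i` or after
position `j` commutes with the deleted letter. -/
def HasCyclicReduction {V : Type*} (G : SimpleGraph V) (w : RaagWord V) : Prop :=
  ∃ (i j : ℕ) (hi : i < w.length) (hj : j < w.length), i < j ∧
    (w.get ⟨i, hi⟩).1 = (w.get ⟨j, hj⟩).1 ∧
    (w.get ⟨i, hi⟩).2 = !(w.get ⟨j, hj⟩).2 ∧
    ∀ (k : ℕ) (hk : k < w.length), (k < i ∨ j < k) →
      lettersCommute G (w.get ⟨k, hk⟩).1 (w.get ⟨i, hi⟩).1

/-- A word is cyclically reduced if it admits neither a reduction nor a cyclic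
reduction. -/
def CyclicallyReduced {V : Type*} (G : SimpleGraph V) (w : RaagWord V) : Prop :=
  ¬ HasReduction G w ∧ ¬ HasCyclicReduction G w

namespace RaagNF

variable {V : Type*} (G : SimpleGraph V)

/-- inverse of a letter -/
def linv (x : V × Bool) : V × Bool := (x.1, !x.2)

@[simp] lemma linv_linv (x : V × Bool) : linv (linv x) = x := by simp [linv]
@[simp] lemma linv_fst (x : V × Bool) : (linv x).1 = x.1 := rfl
@[simp] lemma linv_snd (x : V × Bool) : (linv x).2 = !x.2 := rfl

/-- inverse of a word -/
def wInv (w : RaagWord V) : RaagWord V := (w.map linv).reverse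

@[simp] lemma wInv_nil : wInv ([] : RaagWord V) = [] := rfl
lemma wInv_append (a b : RaagWord V) : wInv (a ++ b) = wInv b ++ wInv a := by
  simp [wInv]
lemma wInv_cons (x : V × Bool) (a : RaagWord V) : wInv (x :: a) = wInv a ++ [linv x] := by
  simp [wInv]
@[simp] lemma wInv_wInv (a : RaagWord V) : wInv (wInv a) = a := by
  simp [wInv, List.map_reverse, Function.comp_def]
@[simp] lemma wInv_singleton (x : V × Bool) : wInv [x] = [linv x] := rfl
lemma mem_wInv {l : V × Bool} {a : RaagWord V} : l ∈ wInv a ↔ linv l ∈ a := by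
  constructor
  · intro h
    simp only [wInv, List.mem_reverse, List.mem_map] at h
    obtain ⟨y, hy, rfl⟩ := h; simpa using hy
  · intro h
    simp only [wInv, List.mem_reverse, List.mem_map]
    exact ⟨linv l, h, by simp⟩

/-- value of a letter -/
def rgen (x : V × Bool) : RAAG G := if x.2 then raagGen G x.1 else (raagGen G x.1)⁻¹

@[simp] lemma wordValue_nil : wordValue G ([] : RaagWord V) = 1 := rfl
lemma wordValue_cons (x : V × Bool) (w : RaagWord V) :
    wordValue G (x :: w) = rgen G x * wordValue G w := by
  simp [wordValue, rgen]
lemma wordValue_append (a b : RaagWord V) :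
    wordValue G (a ++ b) = wordValue G a * wordValue G b := by
  simp [wordValue]
lemma wordValue_singleton (x : V × Bool) : wordValue G [x] = rgen G x := by
  simp [wordValue, rgen]

lemma rgen_linv (x : V × Bool) : rgen G (linv x) = (rgen G x)⁻¹ := by
  cases x with
  | mk v b => cases b <;> simp [rgen, linv]

lemma lettersCommute_symm {u v : V} (h : lettersCommute G u v) : lettersCommute G v u := by
  rcases h with h | h
  · exact Or.inl h.symm
  · exact Or.inr h.symm

lemma commute_raagGen {u v : V} (h : lettersCommute G u v) :
    Commute (raagGen G u) (raagGen G v) := by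
  rcases h with rfl | h
  · exact Commute.refl _
  · have hr : (⁅FreeGroup.of u, FreeGroup.of v⁆ : FreeGroup V) ∈ raagRels G := ⟨u, v, h, rfl⟩
    have h1 : PresentedGroup.mk (raagRels G) ⁅FreeGroup.of u, FreeGroup.of v⁆ = 1 := by
      apply (QuotientGroup.eq_one_iff _).mpr
      exact Subgroup.subset_normalClosure hr
    rw [map_commutatorElement] at h1
    exact commutatorElement_eq_one_iff_commute.mp h1

lemma commute_rgen {x y : V × Bool} (h : lettersCommute G x.1 y.1) :
    Commute (rgen G x) (rgen G y) := by
  have := commute_raagGen G h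
  cases x with
  | mk u a =>
    cases y with
    | mk v b =>
      simp only at this
      cases a <;> cases b <;> simp only [rgen, Bool.false_eq_true, if_false, if_true]
      · exact this.inv_left.inv_right
      · exact this.inv_left
      · exact this.inv_right
      · exact this

lemma commute_value {a : RaagWord V} {x : V × Bool}
    (h : ∀ l ∈ a, lettersCommute G l.1 x.1) :
    Commute (wordValue G a) (rgen G x) := by
  induction a with
  | nil => simp [Commute, SemiconjBy]
  | cons y t ih =>
    rw [wordValue_cons]
    exact Commute.mul_left (commute_rgen G (h y (by simp))) (ih fun l hl => h l (by simp [hl]))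

lemma wordValue_wInv (a : RaagWord V) : wordValue G (wInv a) = (wordValue G a)⁻¹ := by
  induction a with
  | nil => simp
  | cons x t ih =>
    rw [wInv_cons, wordValue_append, ih, wordValue_singleton, rgen_linv,
      wordValue_cons, mul_inv_rev]

lemma value_mk (l : List (V × Bool)) :
    PresentedGroup.mk (raagRels G) (FreeGroup.mk l) = wordValue G l := by
  induction l with
  | nil =>
    have : (FreeGroup.mk ([] : List (V × Bool))) = (1 : FreeGroup V) := by
      rw [← FreeGroup.one_eq_mk]
    rw [this, map_one]; rfl
  | cons x t ih =>
    have hx : FreeGroup.mk (x :: t) = FreeGroup.mk [x] * FreeGroup.mk t := by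
      rw [FreeGroup.mul_mk]; rfl
    rw [hx, map_mul, ih, wordValue_cons]
    congr 1
    cases x with
    | mk v b =>
      cases b
      · have h2 : ((FreeGroup.mk [(v, true)])⁻¹ : FreeGroup V) = FreeGroup.mk [(v, false)] := by
          rw [FreeGroup.inv_mk]; rfl
        have : (FreeGroup.mk [(v, false)]) = (FreeGroup.of v)⁻¹ := by rw [← h2]; rfl
        rw [this, map_inv]; rfl
      · rfl

lemma exists_word (g : RAAG G) : ∃ w : RaagWord V, wordValue G w = g := by
  classical
  obtain ⟨f, rfl⟩ := PresentedGroup.mk_surjective (raagRels G) g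
  exact ⟨f.toWord, by rw [← value_mk, FreeGroup.mk_toWord]⟩

lemma exists_word_of_mem_sub {Δ : Set V} {g : RAAG G} (hg : g ∈ raagSub G Δ) :
    ∃ w : RaagWord V, (∀ p ∈ w, p.1 ∈ Δ) ∧ wordValue G w = g := by
  induction hg using Subgroup.closure_induction with
  | mem g hg =>
    obtain ⟨v, hv, rfl⟩ := hg
    exact ⟨[(v, true)], by simpa using hv, by simp [wordValue_singleton, rgen]⟩
  | one => exact ⟨[], by simp, rfl⟩
  | mul g h _ _ ihg ihh =>
    obtain ⟨w1, h1, rfl⟩ := ihg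
    obtain ⟨w2, h2, rfl⟩ := ihh
    refine ⟨w1 ++ w2, ?_, (wordValue_append G w1 w2)⟩
    intro p hp
    rcases List.mem_append.mp hp with h | h
    · exact h1 p h
    · exact h2 p h
  | inv g _ ihg =>
    obtain ⟨w1, h1, rfl⟩ := ihg
    exact ⟨wInv w1, fun p hp => by
      have := mem_wInv.mp hp
      have := h1 _ this
      simpa using this, wordValue_wInv G w1⟩

lemma value_mem_sub {Δ : Set V} {w : RaagWord V} (h : ∀ p ∈ w, p.1 ∈ Δ) :
    wordValue G w ∈ raagSub G Δ := by
  induction w with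
  | nil => simp [Subgroup.one_mem]
  | cons x t ih =>
    rw [wordValue_cons]
    refine Subgroup.mul_mem _ ?_ (ih fun p hp => h p (by simp [hp]))
    have hx : raagGen G x.1 ∈ raagSub G Δ :=
      Subgroup.subset_closure ⟨x.1, h x (by simp), rfl⟩
    cases hb : x.2 <;> simp only [rgen, hb, Bool.false_eq_true, if_false, if_true]
    · exact Subgroup.inv_mem _ hx
    · exact hx

/-! ### Lists: locating letters in concatenations -/

lemma loc {α : Type*} {A B P S : List α} {x : α} (h : A ++ B = P ++ x :: S) :
    (∃ T, A = P ++ x :: T ∧ S = T ++ B) ∨ (∃ T, P = A ++ T ∧ B = T ++ x :: S) := by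
  induction A generalizing P with
  | nil => exact Or.inr ⟨P, by simp, by simpa using h⟩
  | cons a A' ih =>
    cases P with
    | nil =>
      simp only [List.cons_append, List.nil_append, List.cons.injEq] at h
      obtain ⟨rfl, h⟩ := h
      exact Or.inl ⟨A', by simp, h.symm⟩
    | cons p P' =>
      simp only [List.cons_append, List.cons.injEq] at h
      obtain ⟨rfl, h⟩ := h
      rcases ih h with ⟨T, h1, h2⟩ | ⟨T, h1, h2⟩
      · exact Or.inl ⟨T, by rw [h1]; simp, h2⟩
      · exact Or.inr ⟨T, by rw [h1]; simp, h2⟩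

lemma loc3 {α : Type*} {A B P S : List α} {a b x : α} (h : A ++ a :: b :: B = P ++ x :: S) :
    (∃ T, A = P ++ x :: T ∧ S = T ++ a :: b :: B)
    ∨ (P = A ∧ x = a ∧ S = b :: B)
    ∨ (P = A ++ [a] ∧ x = b ∧ S = B)
    ∨ (∃ T, P = A ++ a :: b :: T ∧ B = T ++ x :: S) := by
  rcases loc h with ⟨T, h1, h2⟩ | ⟨T, h1, h2⟩
  · exact Or.inl ⟨T, h1, h2⟩
  · cases T with
    | nil =>
      simp only [List.nil_append, List.cons.injEq] at h2
      obtain ⟨rfl, h2⟩ := h2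
      exact Or.inr (Or.inl ⟨by simpa using h1, rfl, h2.symm⟩)
    | cons t T' =>
      simp only [List.cons_append, List.cons.injEq] at h2
      obtain ⟨rfl, h2⟩ := h2
      cases T' with
      | nil =>
        simp only [List.nil_append, List.cons.injEq] at h2
        obtain ⟨rfl, h2⟩ := h2
        exact Or.inr (Or.inr (Or.inl ⟨by simpa using h1, rfl, h2.symm⟩))
      | cons t' T'' =>
        simp only [List.cons_append, List.cons.injEq] at h2
        obtain ⟨rfl, h2⟩ := h2
        exact Or.inr (Or.inr (Or.inr ⟨T'', by simpa using h1, h2⟩))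

lemma loc2 {α : Type*} {A B w₁ w₂ : List α} {a b : α} (h : A ++ a :: b :: B = w₁ ++ w₂) :
    (∃ T, A = w₁ ++ T ∧ w₂ = T ++ a :: b :: B)
    ∨ (w₁ = A ++ [a] ∧ w₂ = b :: B)
    ∨ (∃ T, w₁ = A ++ a :: b :: T ∧ B = T ++ w₂) := by
  rcases loc (A := w₁) (B := w₂) h.symm with ⟨T, h1, h2⟩ | ⟨T, h1, h2⟩
  · -- w₁ = A ++ a :: T , b :: B = T ++ w₂
    cases T with
    | nil => exact Or.inr (Or.inl ⟨by simpa using h1, by simpa using h2.symm⟩)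
    | cons t T' =>
      simp only [List.cons_append, List.cons.injEq] at h2
      obtain ⟨rfl, h2⟩ := h2
      exact Or.inr (Or.inr ⟨T', by rw [h1], h2⟩)
  · exact Or.inl ⟨T, h1, h2⟩

/-! ### Reductions via splittings -/

/-- `w` contains a cancellable pair (with all letters in between commuting with it). -/
def SplitRed (w : RaagWord V) : Prop :=
  ∃ (P : RaagWord V) (x : V × Bool) (M S : RaagWord V),
    w = P ++ x :: (M ++ linv x :: S) ∧ ∀ l ∈ M, lettersCommute G l.1 x.1

def Red (w : RaagWord V) : Prop := ¬ SplitRed G w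

/-- `w` admits a reduction after some cyclic rotation. -/
def CyclicBad (w : RaagWord V) : Prop :=
  ∃ w₁ w₂, w = w₁ ++ w₂ ∧ SplitRed G (w₂ ++ w₁)

/-- swapping two adjacent commuting letters -/
def Step (w w' : RaagWord V) : Prop :=
  ∃ (A : RaagWord V) (a b : V × Bool) (B : RaagWord V),
    w = A ++ a :: b :: B ∧ w' = A ++ b :: a :: B ∧ lettersCommute G a.1 b.1

def Sim : RaagWord V → RaagWord V → Prop := Relation.ReflTransGen (Step G)

lemma Step.symm' {w w' : RaagWord V} (h : Step G w w') : Step G w' w := by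
  obtain ⟨A, a, b, B, h1, h2, h3⟩ := h
  exact ⟨A, b, a, B, h2, h1, lettersCommute_symm G h3⟩

lemma sim_refl (w : RaagWord V) : Sim G w w := Relation.ReflTransGen.refl

lemma sim_symm {w w' : RaagWord V} (h : Sim G w w') : Sim G w' w :=
  by
    induction h with
    | refl => exact Relation.ReflTransGen.refl
    | tail _ hs ih => exact Relation.ReflTransGen.head (Step.symm' G hs) ih

lemma sim_trans {w₁ w₂ w₃ : RaagWord V} (h1 : Sim G w₁ w₂) (h2 : Sim G w₂ w₃) :
    Sim G w₁ w₃ := Relation.ReflTransGen.trans h1 h2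

lemma step_sim {w w' : RaagWord V} (h : Step G w w') : Sim G w w' :=
  Relation.ReflTransGen.single h

lemma sim_cons {w w' : RaagWord V} (x : V × Bool) (h : Sim G w w') :
    Sim G (x :: w) (x :: w') := by
  induction h with
  | refl => exact sim_refl G _
  | tail _ hstep ih =>
    refine sim_trans G ih (step_sim G ?_)
    obtain ⟨A, a, b, B, h1, h2, h3⟩ := hstep
    exact ⟨x :: A, a, b, B, by rw [h1]; rfl, by rw [h2]; rfl, h3⟩

lemma sim_append_left (a : RaagWord V) {w w' : RaagWord V} (h : Sim G w w') :
    Sim G (a ++ w) (a ++ w') := by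
  induction a with
  | nil => simpa using h
  | cons x t ih => exact sim_cons G x ih

lemma sim_append_right {w w' : RaagWord V} (b : RaagWord V) (h : Sim G w w') :
    Sim G (w ++ b) (w' ++ b) := by
  induction h with
  | refl => exact sim_refl G _
  | tail _ hstep ih =>
    refine sim_trans G ih (step_sim G ?_)
    obtain ⟨A, a', b', B, h1, h2, h3⟩ := hstep
    exact ⟨A, a', b', B ++ b, by rw [h1]; simp, by rw [h2]; simp, h3⟩

lemma sim_perm {w w' : RaagWord V} (h : Sim G w w') : w.Perm w' := by
  induction h with
  | refl => exact List.Perm.refl _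
  | tail _ hstep ih =>
    obtain ⟨A, a, b, B, h1, h2, h3⟩ := hstep
    subst h1 h2
    exact ih.trans ((List.Perm.append_left A (List.Perm.swap b a B)))

lemma sim_value {w w' : RaagWord V} (h : Sim G w w') : wordValue G w = wordValue G w' := by
  induction h with
  | refl => rfl
  | tail _ hstep ih =>
    obtain ⟨A, a, b, B, h1, h2, h3⟩ := hstep
    subst h1 h2
    rw [ih]
    simp only [wordValue_append, wordValue_cons]
    congr 1
    rw [← mul_assoc, ← mul_assoc, (commute_rgen G h3).eq]

lemma bubble {a : RaagWord V} {x : V × Bool} (b : RaagWord V)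
    (h : ∀ l ∈ a, lettersCommute G l.1 x.1) :
    Sim G (x :: (a ++ b)) (a ++ x :: b) := by
  induction a with
  | nil => exact sim_refl G _
  | cons y t ih =>
    have s1 : Step G (x :: (y :: t ++ b)) (y :: x :: (t ++ b)) :=
      ⟨[], x, y, t ++ b, by simp, by simp, lettersCommute_symm G (h y (by simp))⟩
    exact sim_trans G (step_sim G s1) (sim_cons G y (ih (fun l hl => h l (by simp [hl]))))

/-- deleting a cancellable pair does not change the value -/
lemma value_del {P M S : RaagWord V} {x : V × Bool}
    (hM : ∀ l ∈ M, lettersCommute G l.1 x.1) :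
    wordValue G (P ++ x :: (M ++ linv x :: S)) = wordValue G (P ++ (M ++ S)) := by
  simp only [wordValue_append, wordValue_cons]
  have hc : Commute (wordValue G M) (rgen G x) := commute_value G hM
  rw [rgen_linv, ← mul_assoc (rgen G x), hc.eq.symm]
  group

/-- A swap of adjacent commuting letters preserves the existence of a reduction. -/
lemma splitRed_swap {A B : RaagWord V} {a b : V × Bool}
    (hab : lettersCommute G a.1 b.1)
    (h : SplitRed G (A ++ a :: b :: B)) : SplitRed G (A ++ b :: a :: B) := by
  obtain ⟨P, x, M, S, heq, hM⟩ := h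
  rcases loc3 heq with
    ⟨T, hA, hS⟩ | ⟨hP, hx, hS⟩ | ⟨hP, hx, hS⟩ | ⟨T, hP, hB⟩
  · -- x inside A ; now locate linv x in T ++ a :: b :: B
    rcases loc3 (A := T) (a := a) (b := b) (B := B) (P := M) (x := linv x) (S := S)
        hS.symm with
      ⟨T₂, hT, hS₂⟩ | ⟨hM₂, hlx, hS₂⟩ | ⟨hM₂, hlx, hS₂⟩ | ⟨T₂, hM₂, hB₂⟩
    · -- both pair letters inside A
      refine ⟨P, x, M, T₂ ++ b :: a :: B, ?_, hM⟩
      rw [hA, hT]; simp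
    · -- linv x = a
      refine ⟨P, x, M ++ [b], B, ?_, ?_⟩
      · rw [hA, hM₂, ← hlx]; simp
      · intro l hl
        rcases List.mem_append.mp hl with hl | hl
        · exact hM l hl
        · simp only [List.mem_singleton] at hl
          subst hl
          have h2 := lettersCommute_symm G hab
          rw [← hlx] at h2
          simpa using h2
    · -- linv x = b
      refine ⟨P, x, T, a :: B, ?_, ?_⟩
      · rw [hA, ← hlx]; simp
      · intro l hl
        apply hM
        rw [hM₂]
        exact List.mem_append.mpr (Or.inl hl)
    · -- pair (a,b) inside M
      refine ⟨P, x, T ++ b :: a :: T₂, S, ?_, ?_⟩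
      · rw [hA, hB₂]; simp
      · intro l hl
        apply hM
        rw [hM₂]
        simp only [List.mem_append, List.mem_cons] at hl ⊢
        tauto
  · -- x = a
    subst hx
    cases M with
    | nil =>
      simp only [List.nil_append, List.cons.injEq] at hS
      obtain ⟨hb, hB⟩ := hS
      refine ⟨A, linv x, [], B, ?_, by simp⟩
      rw [← hb]; simp
    | cons m M' =>
      simp only [List.cons_append, List.cons.injEq] at hS
      obtain ⟨hm, hB⟩ := hS
      refine ⟨A ++ [b], x, M', S, ?_, fun l hl => hM l (by simp [hl])⟩
      rw [← hB, ← hm]; simp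
  · -- x = b
    subst hx
    refine ⟨A, x, a :: M, S, ?_, ?_⟩
    · rw [← hS]; simp
    · intro l hl
      rcases List.mem_cons.mp hl with hl | hl
      · subst hl; exact hab
      · exact hM l hl
  · -- pair inside B
    refine ⟨A ++ b :: a :: T, x, M, S, ?_, hM⟩
    rw [hB]; simp

lemma step_splitRed {w w' : RaagWord V} (h : Step G w w') (hr : SplitRed G w) :
    SplitRed G w' := by
  obtain ⟨A, a, b, B, h1, h2, h3⟩ := h
  subst h1 h2
  exact splitRed_swap G h3 hr

lemma sim_splitRed {w w' : RaagWord V} (h : Sim G w w') (hr : SplitRed G w) :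
    SplitRed G w' := by
  induction h with
  | refl => exact hr
  | tail _ hstep ih => exact step_splitRed G hstep ih

lemma sim_red {w w' : RaagWord V} (h : Sim G w w') (hr : Red G w) : Red G w' :=
  fun hs => hr (sim_splitRed G (sim_symm G h) hs)

lemma cyclicBad_rotate {u v : RaagWord V} (h : CyclicBad G (u ++ v)) :
    CyclicBad G (v ++ u) := by
  obtain ⟨w₁, w₂, heq, hs⟩ := h
  rcases List.append_eq_append_iff.mp heq with ⟨T, h1, h2⟩ | ⟨T, h1, h2⟩
  · refine ⟨T, w₂ ++ u, by rw [h2]; simp, ?_⟩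
    rw [h1] at hs
    simpa [List.append_assoc] using hs
  · refine ⟨v ++ w₁, T, by rw [h1]; simp, ?_⟩
    rw [h2] at hs
    simpa [List.append_assoc] using hs

lemma cyclicBad_step {w w' : RaagWord V} (h : Step G w w') (hc : CyclicBad G w) :
    CyclicBad G w' := by
  obtain ⟨A, a, b, B, h1, h2, hab⟩ := h
  subst h1 h2
  obtain ⟨w₁, w₂, heq, hs⟩ := hc
  rcases loc2 heq with ⟨T, hA, hw₂⟩ | ⟨hw₁, hw₂⟩ | ⟨T, hw₁, hB⟩
  · -- cut inside A
    have hs' : SplitRed G (T ++ a :: b :: (B ++ w₁)) := by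
      rw [hw₂] at hs
      simpa [List.append_assoc] using hs
    have hs'' := splitRed_swap G hab hs'
    refine ⟨w₁, T ++ b :: a :: B, by rw [hA]; simp, ?_⟩
    simpa [List.append_assoc] using hs''
  · -- the cut separates a and b
    subst hw₁ hw₂
    obtain ⟨P, x, M, S, heqr, hM⟩ := hs
    have heqr' : b :: (B ++ (A ++ [a])) = P ++ x :: (M ++ linv x :: S) := by
      simpa [List.append_assoc] using heqr
    cases P with
    | nil =>
      simp only [List.nil_append, List.cons.injEq] at heqr'
      obtain ⟨hxb, heq2⟩ := heqr'
      subst hxb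
      -- B ++ (A ++ [a]) = M ++ linv b? no: = M ++ linv x :: S with x := b
      have heq3 : (B ++ A) ++ [a] = M ++ linv b :: S := by simpa [List.append_assoc] using heq2
      rcases loc (A := B ++ A) (B := [a]) heq3 with ⟨T, hBA, hS⟩ | ⟨T, hMT, hTa⟩
      · -- linv b inside B ++ A
        refine ⟨A, b :: a :: B, rfl, ?_⟩
        refine ⟨[], b, a :: M, T, ?_, ?_⟩
        · rw [show (b :: a :: B) ++ A = b :: a :: (B ++ A) by simp, hBA]; simp
        · intro l hl
          rcases List.mem_cons.mp hl with hl | hl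
          · subst hl; exact hab
          · exact hM l hl
      · -- linv b = a (the last letter)
        cases T with
        | nil =>
          simp only [List.nil_append, List.cons.injEq] at hTa
          obtain ⟨hba, hS⟩ := hTa
          refine ⟨A, b :: a :: B, rfl, ?_⟩
          refine ⟨[], b, [], B ++ A, ?_, by simp⟩
          rw [← hba]; simp
        | cons t T' =>
          simp only [List.cons_append, List.cons.injEq] at hTa
          obtain ⟨-, hTa⟩ := hTa
          exact absurd hTa (by simp)
    | cons p P' =>
      simp only [List.cons_append, List.cons.injEq] at heqr'
      obtain ⟨rfl, heq2⟩ := heqr'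
      -- B ++ (A ++ [a]) = P' ++ x :: (M ++ linv x :: S)
      have heq3 : (B ++ A) ++ [a] = (P' ++ x :: M) ++ linv x :: S := by
        simpa [List.append_assoc] using heq2
      rcases loc (A := B ++ A) (B := [a]) heq3 with ⟨T, hBA, hS⟩ | ⟨T, hPM, hTa⟩
      · -- the pair is inside B ++ A
        refine ⟨A, b :: a :: B, rfl, ?_⟩
        have hBA' : B ++ A = P' ++ x :: (M ++ linv x :: T) := by
          rw [hBA]; simp
        refine ⟨b :: a :: P', x, M, T, ?_, hM⟩
        rw [show (b :: a :: B) ++ A = b :: a :: (B ++ A) by simp, hBA']; simp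
      · -- linv x = a
        cases T with
        | nil =>
          simp only [List.nil_append, List.cons.injEq] at hTa
          obtain ⟨hxa, hS⟩ := hTa
          simp only [List.append_nil] at hPM
          -- hPM : P' ++ x :: M = B ++ A
          rcases loc (A := B) (B := A) hPM.symm with ⟨T₂, hB2, hM2⟩ | ⟨T₂, hP2, hA2⟩
          · -- x inside B : B = P' ++ x :: T₂, M = T₂ ++ A
            have hT₂ : ∀ l ∈ T₂, lettersCommute G l.1 x.1 := fun l hl =>
              hM l (by rw [hM2]; exact List.mem_append.mpr (Or.inl hl))
            have hA' : ∀ l ∈ A, lettersCommute G l.1 x.1 := fun l hl =>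
              hM l (by rw [hM2]; exact List.mem_append.mpr (Or.inr hl))
            refine ⟨A ++ b :: a :: P', x :: T₂, by rw [hB2]; simp, ?_⟩
            refine ⟨[], x, T₂ ++ A ++ [b], P', ?_, ?_⟩
            · rw [← hxa]; simp
            · intro l hl
              simp only [List.append_assoc, List.mem_append, List.mem_singleton] at hl
              rcases hl with hl | hl | hl
              · exact hT₂ l hl
              · exact hA' l hl
              · subst hl
                have h2 := lettersCommute_symm G hab
                rw [hxa] at h2
                simpa using h2
          · -- x inside A : P' = B ++ T₂, A = T₂ ++ x :: M
            refine ⟨T₂, x :: M ++ b :: a :: B, by rw [hA2]; simp, ?_⟩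
            refine ⟨[], x, M ++ [b], B ++ T₂, ?_, ?_⟩
            · rw [← hxa]; simp
            · intro l hl
              simp only [List.mem_append, List.mem_singleton] at hl
              rcases hl with hl | hl
              · exact hM l hl
              · subst hl
                have h2 := lettersCommute_symm G hab
                rw [hxa] at h2
                simpa using h2
        | cons t T' =>
          simp only [List.cons_append, List.cons.injEq] at hTa
          obtain ⟨-, hTa⟩ := hTa
          exact absurd hTa (by simp)
  · -- cut inside B
    have hs' : SplitRed G ((w₂ ++ A) ++ a :: b :: T) := by
      rw [hw₁] at hs
      simpa [List.append_assoc] using hs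
    have hs'' := splitRed_swap G hab hs'
    refine ⟨A ++ b :: a :: T, w₂, by rw [hB]; simp, ?_⟩
    simpa [List.append_assoc] using hs''

lemma sim_cyclicBad {w w' : RaagWord V} (h : Sim G w w') (hc : CyclicBad G w) :
    CyclicBad G w' := by
  induction h with
  | refl => exact hc
  | tail _ hstep ih => exact cyclicBad_step G hstep ih

lemma splitRed_cyclicBad {w : RaagWord V} (h : SplitRed G w) : CyclicBad G w :=
  ⟨w, [], by simp, by simpa using h⟩

/-! ### The letter-pushing action and the normal form theorem -/

/-- `x` can be cancelled at the front of `w`. -/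
def CC (x : V × Bool) (w : RaagWord V) : Prop :=
  ∃ a b, w = a ++ linv x :: b ∧ ∀ l ∈ a, lettersCommute G l.1 x.1

lemma CC_nil (x : V × Bool) : ¬ CC G x [] := by
  rintro ⟨a, b, h, -⟩
  exact absurd h.symm (by simp)

lemma CC_cons {x y : V × Bool} {t : RaagWord V} :
    CC G x (y :: t) ↔ y = linv x ∨ (lettersCommute G y.1 x.1 ∧ CC G x t) := by
  constructor
  · rintro ⟨a, b, h, ha⟩
    cases a with
    | nil =>
      simp only [List.nil_append, List.cons.injEq] at h
      exact Or.inl h.1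
    | cons c a' =>
      simp only [List.cons_append, List.cons.injEq] at h
      obtain ⟨rfl, h⟩ := h
      exact Or.inr ⟨ha y (by simp), a', b, h, fun l hl => ha l (by simp [hl])⟩
  · rintro (rfl | ⟨hy, a, b, rfl, ha⟩)
    · exact ⟨[], t, rfl, by simp⟩
    · refine ⟨y :: a, b, rfl, ?_⟩
      intro l hl
      rcases List.mem_cons.mp hl with rfl | hl
      · exact hy
      · exact ha l hl

/-- delete the first occurrence of `linv x`. -/
noncomputable def del (x : V × Bool) : RaagWord V → RaagWord V
  | [] => []
  | y :: t => by
    classical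
    exact if y = linv x then t else y :: del x t

@[simp] lemma del_nil (x : V × Bool) : del x [] = [] := rfl

lemma del_cons_pos {x y : V × Bool} (t : RaagWord V) (h : y = linv x) :
    del x (y :: t) = t := by
  simp [del, h]

lemma del_cons_neg {x y : V × Bool} (t : RaagWord V) (h : ¬ y = linv x) :
    del x (y :: t) = y :: del x t := by
  simp [del, h]

open Classical in
/-- multiply `w` on the left by `x`, staying reduced. -/
noncomputable def push (x : V × Bool) (w : RaagWord V) : RaagWord V :=
  if CC G x w then del x w else x :: w

lemma push_pos {x : V × Bool} {w : RaagWord V} (h : CC G x w) : push G x w = del x w := by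
  simp [push, h]

lemma push_neg {x : V × Bool} {w : RaagWord V} (h : ¬ CC G x w) : push G x w = x :: w := by
  simp [push, h]

/-- Structure of the deletion when cancellation is possible. -/
lemma CC_del {x : V × Bool} {w : RaagWord V} (h : CC G x w) :
    ∃ a b, w = a ++ linv x :: b ∧ del x w = a ++ b ∧
      ∀ l ∈ a, lettersCommute G l.1 x.1 := by
  induction w with
  | nil => exact absurd h (CC_nil G x)
  | cons y t ih =>
    by_cases hy : y = linv x
    · exact ⟨[], t, by simp [hy], del_cons_pos t hy, by simp⟩
    · rcases (CC_cons G).mp h with hy' | ⟨hyc, hct⟩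
      · exact absurd hy' hy
      · obtain ⟨a, b, ht, hdel, ha⟩ := ih hct
        refine ⟨y :: a, b, by rw [ht]; simp, ?_, ?_⟩
        · rw [del_cons_neg t hy, hdel]; simp
        · intro l hl
          rcases List.mem_cons.mp hl with rfl | hl
          · exact hyc
          · exact ha l hl

lemma push_value (x : V × Bool) {w : RaagWord V} :
    wordValue G (push G x w) = rgen G x * wordValue G w := by
  by_cases h : CC G x w
  · obtain ⟨a, b, hw, hdel, ha⟩ := CC_del G h
    rw [push_pos G h, hdel, hw]
    simp only [wordValue_append, wordValue_cons]
    have hc : Commute (wordValue G a) (rgen G x) := commute_value G ha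
    have h3 : rgen G x * (wordValue G a * ((rgen G x)⁻¹ * wordValue G b)) =
        wordValue G a * wordValue G b := by
      rw [← mul_assoc, ← hc.eq, mul_assoc, mul_inv_cancel_left]
    rw [rgen_linv, h3]
  · rw [push_neg G h, wordValue_cons]

lemma red_nil : Red G ([] : RaagWord V) := by
  rintro ⟨P, x, M, S, h, -⟩
  exact absurd h (by simp)

lemma red_cons {x : V × Bool} {t : RaagWord V} (h : Red G (x :: t)) : Red G t := by
  rintro ⟨P, y, M, S, rfl, hM⟩
  exact h ⟨x :: P, y, M, S, rfl, hM⟩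

lemma notCC_of_red {x : V × Bool} {t : RaagWord V} (h : Red G (x :: t)) : ¬ CC G x t := by
  rintro ⟨a, b, rfl, ha⟩
  exact h ⟨[], x, a, b, rfl, ha⟩

lemma red_push (x : V × Bool) {w : RaagWord V} (h : Red G w) : Red G (push G x w) := by
  by_cases hcc : CC G x w
  · obtain ⟨a, b, hw, hdel, ha⟩ := CC_del G hcc
    rw [push_pos G hcc, hdel]
    rintro ⟨P, y, M, S, heq, hM⟩
    apply h
    rcases loc (A := a) (B := b) heq with ⟨T, haP, hS⟩ | ⟨T, hP, hb⟩
    · -- y inside a ; find linv y in T ++ b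
      have hTb : T ++ b = M ++ linv y :: S := hS.symm
      rcases loc (A := T) (B := b) hTb with ⟨T₂, hT, hS₂⟩ | ⟨T₂, hM₂, hb₂⟩
      · -- both inside a
        refine ⟨P, y, M, T₂ ++ linv x :: b, ?_, hM⟩
        rw [hw, haP, hT]; simp
      · -- y in a, linv y in b
        refine ⟨P, y, T ++ linv x :: T₂, S, ?_, ?_⟩
        · rw [hw, haP, hb₂]; simp
        · intro l hl
          simp only [List.mem_append, List.mem_cons] at hl
          rcases hl with hl | hl | hl
          · exact hM l (by rw [hM₂]; exact List.mem_append.mpr (Or.inl hl))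
          · subst hl
            have h2 : lettersCommute G y.1 x.1 := ha y (by rw [haP]; simp)
            have := lettersCommute_symm G h2
            simpa using this
          · exact hM l (by rw [hM₂]; simp [hl])
    · -- the pair is inside b
      refine ⟨a ++ linv x :: T, y, M, S, ?_, hM⟩
      rw [hw, hb]; simp
  · rw [push_neg G hcc]
    rintro ⟨P, y, M, S, heq, hM⟩
    cases P with
    | nil =>
      simp only [List.nil_append, List.cons.injEq] at heq
      obtain ⟨rfl, heq⟩ := heq
      exact hcc ⟨M, S, heq, hM⟩
    | cons p P' =>
      simp only [List.cons_append, List.cons.injEq] at heq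
      obtain ⟨rfl, heq⟩ := heq
      exact h ⟨P', y, M, S, heq, hM⟩

lemma push_push_linv {x : V × Bool} {w : RaagWord V} (h : Red G w) :
    Sim G (push G x (push G (linv x) w)) w := by
  by_cases hcc : CC G (linv x) w
  · obtain ⟨a, b, hw, hdel, ha⟩ := CC_del G hcc
    rw [linv_linv] at hw
    have ha' : ∀ l ∈ a, lettersCommute G l.1 x.1 := by
      intro l hl
      simpa using ha l hl
    have hnc : ¬ CC G x (a ++ b) := by
      rintro ⟨a', b', heq, ha''⟩
      apply h
      rcases loc (A := a) (B := b) heq with ⟨T, haT, hS⟩ | ⟨T, hP, hb⟩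
      · -- linv x inside a
        refine ⟨a', linv x, T, b, ?_, ?_⟩
        · rw [hw, haT]; simp
        · intro l hl
          have : l ∈ a := by rw [haT]; simp [hl]
          simpa using ha' l this
      · -- linv x inside b
        refine ⟨a, x, T, b', ?_, ?_⟩
        · rw [hw, hb]
        · intro l hl
          exact ha'' l (by rw [hP]; simp [hl])
    rw [push_pos G hcc, hdel, push_neg G hnc, hw]
    exact bubble G b ha'
  · rw [push_neg G hcc]
    have hcc2 : CC G x (linv x :: w) := (CC_cons G).mpr (Or.inl rfl)
    rw [push_pos G hcc2, del_cons_pos w rfl]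
    exact sim_refl G w

lemma step_CC {x : V × Bool} {w w' : RaagWord V} (h : Step G w w') :
    CC G x w → CC G x w' := by
  obtain ⟨A, a, b, B, rfl, rfl, hab⟩ := h
  rintro ⟨P, S, heq, hP⟩
  rcases loc3 heq with ⟨T, hA, hS⟩ | ⟨hPA, hxa, hS⟩ | ⟨hPA, hxb, hS⟩ | ⟨T, hPA, hB⟩
  · exact ⟨P, T ++ b :: a :: B, by rw [hA]; simp, hP⟩
  · refine ⟨A ++ [b], B, by rw [← hxa]; simp, ?_⟩
    intro l hl
    simp only [List.mem_append, List.mem_singleton] at hl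
    rcases hl with hl | hl
    · exact hP l (by rw [hPA]; exact hl)
    · subst hl
      have h2 := lettersCommute_symm G hab
      rw [← hxa] at h2
      simpa using h2
  · refine ⟨A, a :: B, by rw [← hxb], ?_⟩
    intro l hl
    exact hP l (by rw [hPA]; simp [hl])
  · refine ⟨A ++ b :: a :: T, S, by rw [hB]; simp, ?_⟩
    intro l hl
    apply hP
    rw [hPA]
    simp only [List.mem_append, List.mem_cons] at hl ⊢
    tauto

lemma del_swap (x a b : V × Bool) (B : RaagWord V) : ∀ A : RaagWord V,
    del x (A ++ a :: b :: B) = del x (A ++ b :: a :: B) ∨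
    ∃ C D, del x (A ++ a :: b :: B) = C ++ a :: b :: D ∧
      del x (A ++ b :: a :: B) = C ++ b :: a :: D := by
  intro A
  induction A with
  | nil =>
    by_cases ha : a = linv x
    · by_cases hb : b = linv x
      · left
        rw [List.nil_append, List.nil_append, del_cons_pos _ ha, del_cons_pos _ hb,
          ha, hb]
      · left
        rw [List.nil_append, List.nil_append, del_cons_pos _ ha, del_cons_neg _ hb,
          del_cons_pos _ ha]
    · by_cases hb : b = linv x
      · left
        rw [List.nil_append, List.nil_append, del_cons_neg _ ha, del_cons_pos _ hb,
          del_cons_pos _ hb]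
      · right
        refine ⟨[], del x B, ?_, ?_⟩
        · rw [List.nil_append, del_cons_neg _ ha, del_cons_neg _ hb]; rfl
        · rw [List.nil_append, del_cons_neg _ hb, del_cons_neg _ ha]; rfl
  | cons c A' ih =>
    by_cases hc : c = linv x
    · right
      refine ⟨A', B, ?_, ?_⟩
      · rw [List.cons_append, del_cons_pos _ hc]
      · rw [List.cons_append, del_cons_pos _ hc]
    · rcases ih with h | ⟨C, D, h1, h2⟩
      · left
        rw [List.cons_append, del_cons_neg _ hc, List.cons_append, del_cons_neg _ hc, h]
      · right
        refine ⟨c :: C, D, ?_, ?_⟩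
        · rw [List.cons_append, del_cons_neg _ hc, h1]; rfl
        · rw [List.cons_append, del_cons_neg _ hc, h2]; rfl

lemma step_push (x : V × Bool) {w w' : RaagWord V} (h : Step G w w') :
    Sim G (push G x w) (push G x w') := by
  by_cases hcc : CC G x w
  · have hcc' : CC G x w' := step_CC G h hcc
    rw [push_pos G hcc, push_pos G hcc']
    obtain ⟨A, a, b, B, rfl, rfl, hab⟩ := h
    rcases del_swap x a b B A with h1 | ⟨C, D, h1, h2⟩
    · rw [h1]; exact sim_refl G _
    · rw [h1, h2]
      exact step_sim G ⟨C, a, b, D, rfl, rfl, hab⟩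
  · have hcc' : ¬ CC G x w' := fun hc => hcc (step_CC G (Step.symm' G h) hc)
    rw [push_neg G hcc, push_neg G hcc']
    exact sim_cons G x (step_sim G h)

lemma sim_push (x : V × Bool) {w w' : RaagWord V} (h : Sim G w w') :
    Sim G (push G x w) (push G x w') := by
  induction h with
  | refl => exact sim_refl G _
  | tail _ hstep ih => exact sim_trans G ih (step_push G x hstep)

/-- cancellability is insensitive to push by a distinct adjacent letter. -/
lemma CC_push {x y : V × Bool} (hne : x.1 ≠ y.1) (hc : lettersCommute G y.1 x.1)
    {w : RaagWord V} : CC G x (push G y w) ↔ CC G x w := by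
  have hnexy : ¬ (y : V × Bool) = linv x :=
    fun h => hne (by simpa using (congrArg Prod.fst h).symm)
  by_cases hcc : CC G y w
  · obtain ⟨a, b, hw, hdel, ha⟩ := CC_del G hcc
    rw [push_pos G hcc, hdel]
    constructor
    · rintro ⟨a', b', heq, ha'⟩
      rcases loc (A := a) (B := b) heq with ⟨T, haT, hS⟩ | ⟨T, hP, hb⟩
      · refine ⟨a', T ++ linv y :: b, ?_, ha'⟩
        rw [hw, haT]; simp
      · refine ⟨a ++ linv y :: T, b', ?_, ?_⟩
        · rw [hw, hb]; simp
        · intro l hl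
          simp only [List.mem_append, List.mem_cons] at hl
          rcases hl with hl | hl | hl
          · exact ha' l (by rw [hP]; simp [hl])
          · subst hl
            simpa using hc
          · exact ha' l (by rw [hP]; simp [hl])
    · rintro ⟨a', b', heq, ha'⟩
      rw [hw] at heq
      rcases loc (A := a) (B := linv y :: b) heq with ⟨T, haT, hS⟩ | ⟨T, hP, hb⟩
      · refine ⟨a', T ++ b, ?_, ha'⟩
        rw [haT]; simp
      · cases T with
        | nil =>
          simp only [List.nil_append, List.cons.injEq] at hb
          obtain ⟨hyx, -⟩ := hb
          exact absurd (congrArg Prod.fst hyx) (fun hh => hne (by simpa using hh.symm))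
        | cons t T' =>
          simp only [List.cons_append, List.cons.injEq] at hb
          obtain ⟨rfl, hb⟩ := hb
          refine ⟨a ++ T', b', by rw [hb]; simp, ?_⟩
          intro l hl
          rcases List.mem_append.mp hl with hl | hl
          · exact ha' l (by rw [hP]; simp [hl])
          · exact ha' l (by rw [hP]; simp [hl])
  · rw [push_neg G hcc, CC_cons G]
    constructor
    · rintro (hyl | ⟨-, h2⟩)
      · exact absurd hyl hnexy
      · exact h2
    · intro h2
      exact Or.inr ⟨hc, h2⟩

lemma del_comm {x y : V × Bool} (hne : linv x ≠ linv y) (w : RaagWord V) :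
    del x (del y w) = del y (del x w) := by
  induction w with
  | nil => simp
  | cons c t ih =>
    by_cases hcy : c = linv y
    · rw [del_cons_pos _ hcy, del_cons_neg _ (fun h => hne (h.symm.trans hcy)),
        del_cons_pos _ hcy]
    · by_cases hcx : c = linv x
      · rw [del_cons_neg _ hcy, del_cons_pos _ hcx, del_cons_pos _ hcx]
      · rw [del_cons_neg _ hcy, del_cons_neg _ hcx, del_cons_neg _ hcx,
          del_cons_neg _ hcy, ih]

lemma push_comm {x y : V × Bool} (hadj : G.Adj x.1 y.1) (w : RaagWord V) :
    Sim G (push G x (push G y w)) (push G y (push G x w)) := by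
  have hne : x.1 ≠ y.1 := hadj.ne
  have hc1 : lettersCommute G y.1 x.1 := Or.inr hadj.symm
  have hc2 : lettersCommute G x.1 y.1 := Or.inr hadj
  have hinv : linv x ≠ linv y := fun h => hne (by simpa using congrArg Prod.fst h)
  have hxly : ¬ (x : V × Bool) = linv y := fun h => hne (by simpa using congrArg Prod.fst h)
  have hylx : ¬ (y : V × Bool) = linv x :=
    fun h => hne.symm (by simpa using congrArg Prod.fst h)
  by_cases hx : CC G x w <;> by_cases hy : CC G y w
  · -- both cancel
    have hx' : CC G x (push G y w) := (CC_push G hne hc1).mpr hx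
    have hy' : CC G y (push G x w) := (CC_push G hne.symm hc2).mpr hy
    rw [push_pos G hx', push_pos G hy', push_pos G hx, push_pos G hy,
      del_comm hinv]
    exact sim_refl G _
  · -- only x cancels
    have hx' : CC G x (push G y w) := (CC_push G hne hc1).mpr hx
    have hy' : ¬ CC G y (push G x w) := fun h => hy ((CC_push G hne.symm hc2).mp h)
    rw [push_pos G hx', push_neg G hy', push_neg G hy, push_pos G hx,
      del_cons_neg _ hylx]
    exact sim_refl G _
  · -- only y cancels
    have hx' : ¬ CC G x (push G y w) := fun h => hx ((CC_push G hne hc1).mp h)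
    have hy' : CC G y (push G x w) := (CC_push G hne.symm hc2).mpr hy
    rw [push_neg G hx', push_pos G hy', push_pos G hy, push_neg G hx,
      del_cons_neg _ hxly]
    exact sim_refl G _
  · -- neither cancels
    have hx' : ¬ CC G x (push G y w) := fun h => hx ((CC_push G hne hc1).mp h)
    have hy' : ¬ CC G y (push G x w) := fun h => hy ((CC_push G hne.symm hc2).mp h)
    rw [push_neg G hx', push_neg G hy', push_neg G hy, push_neg G hx]
    exact step_sim G ⟨[], x, y, w, rfl, rfl, hc2⟩

/-! ### The action on reduced words up to swaps, and normal forms -/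

/-- reduced words -/
abbrev RW (G : SimpleGraph V) := {w : RaagWord V // Red G w}

instance rwSetoid (G : SimpleGraph V) : Setoid (RW G) :=
  ⟨fun u v => Sim G u.1 v.1,
    fun _ => sim_refl G _,
    fun h => sim_symm G h,
    fun h h' => sim_trans G h h'⟩

/-- reduced words up to swap equivalence -/
abbrev NFQ (G : SimpleGraph V) := Quotient (rwSetoid G)

noncomputable def pushQ (x : V × Bool) : NFQ G → NFQ G :=
  Quotient.map (fun w => ⟨push G x w.1, red_push G x w.2⟩)
    (fun _ _ h => sim_push G x h)

lemma pushQ_mk (x : V × Bool) (w : RaagWord V) (hw : Red G w) :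
    pushQ G x (Quotient.mk _ ⟨w, hw⟩) = Quotient.mk _ ⟨push G x w, red_push G x hw⟩ := rfl

noncomputable def permOf (v : V) : Equiv.Perm (NFQ G) where
  toFun := pushQ G (v, true)
  invFun := pushQ G (v, false)
  left_inv := by
    intro q
    induction q using Quotient.ind with
    | _ w =>
      obtain ⟨w, hw⟩ := w
      refine Quotient.sound ?_
      have : linv ((v, false) : V × Bool) = (v, true) := rfl
      show Sim G (push G (v, false) (push G (v, true) w)) w
      rw [← this]
      exact push_push_linv G hw
  right_inv := by
    intro q
    induction q using Quotient.ind with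
    | _ w =>
      obtain ⟨w, hw⟩ := w
      refine Quotient.sound ?_
      have : linv ((v, true) : V × Bool) = (v, false) := rfl
      show Sim G (push G (v, true) (push G (v, false) w)) w
      rw [← this]
      exact push_push_linv G hw

lemma permOf_commute {u v : V} (h : G.Adj u v) :
    Commute (permOf G u) (permOf G v) := by
  apply Equiv.ext
  intro q
  induction q using Quotient.ind with
  | _ w =>
    obtain ⟨w, hw⟩ := w
    simp only [Equiv.Perm.mul_apply]
    show pushQ G (u, true) (pushQ G (v, true) (Quotient.mk _ ⟨w, hw⟩)) =
      pushQ G (v, true) (pushQ G (u, true) (Quotient.mk _ ⟨w, hw⟩))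
    rw [pushQ_mk, pushQ_mk, pushQ_mk, pushQ_mk]
    exact Quotient.sound (push_comm G h w)

noncomputable def homPerm : RAAG G →* Equiv.Perm (NFQ G) :=
  PresentedGroup.toGroup (f := fun v => permOf G v) (by
    rintro r ⟨u, v, hadj, rfl⟩
    rw [map_commutatorElement]
    simp only [FreeGroup.lift_apply_of]
    exact commutatorElement_eq_one_iff_commute.mpr (permOf_commute G hadj))

lemma homPerm_rgen (x : V × Bool) (q : NFQ G) :
    homPerm G (rgen G x) q = pushQ G x q := by
  obtain ⟨v, b⟩ := x
  cases b
  · have h1 : rgen G ((v, false) : V × Bool) = (raagGen G v)⁻¹ := rfl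
    rw [h1, map_inv]
    have h2 : homPerm G (raagGen G v) = permOf G v :=
      PresentedGroup.toGroup.of _
    rw [h2]
    rfl
  · have h1 : rgen G ((v, true) : V × Bool) = raagGen G v := rfl
    rw [h1]
    have h2 : homPerm G (raagGen G v) = permOf G v :=
      PresentedGroup.toGroup.of _
    rw [h2]
    rfl

lemma homPerm_value {w : RaagWord V} (hw : Red G w) :
    homPerm G (wordValue G w) (Quotient.mk _ ⟨[], red_nil G⟩) = Quotient.mk _ ⟨w, hw⟩ := by
  induction w with
  | nil => rw [wordValue_nil, map_one]; rfl
  | cons x t ih =>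
    rw [wordValue_cons, map_mul]
    have hred : Red G t := red_cons G hw
    show homPerm G (rgen G x) (homPerm G (wordValue G t) _) = _
    rw [ih hred, homPerm_rgen, pushQ_mk]
    have hpt : push G x t = x :: t := push_neg G (notCC_of_red G hw)
    refine Quotient.sound ?_
    show Sim G (push G x t) (x :: t)
    rw [hpt]
    exact sim_refl G _

/-- The normal form theorem: reduced words with the same value are swap equivalent. -/
theorem nf_unique {w w' : RaagWord V} (hw : Red G w) (hw' : Red G w')
    (h : wordValue G w = wordValue G w') : Sim G w w' := by
  have h1 := homPerm_value G hw
  have h2 := homPerm_value G hw'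
  rw [h] at h1
  rw [h1] at h2
  exact Quotient.exact h2

/-! ### The sandwich lemma -/

@[simp] lemma wInv_length (a : RaagWord V) : (wInv a).length = a.length := by
  simp [wInv]

lemma comm3 {H : Type*} [Group H] {a b : H} (h : Commute a b) (c : H) :
    a * (b * c) = b * (a * c) := by
  rw [← mul_assoc, h.eq, mul_assoc]

lemma splitRed_wInv {d : RaagWord V} (h : SplitRed G (wInv d)) : SplitRed G d := by
  obtain ⟨P, x, M, S, heq, hM⟩ := h
  refine ⟨wInv S, x, wInv M, wInv P, ?_, ?_⟩
  · rw [← wInv_wInv d, heq]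
    simp [wInv_append, wInv_cons, List.append_assoc]
  · intro l hl
    have := hM (linv l) (mem_wInv.mp hl)
    simpa using this

lemma commute_value_rgen {a : RaagWord V} {x : V × Bool}
    (h : ∀ l ∈ a, lettersCommute G l.1 x.1) :
    Commute (rgen G x) (wordValue G a) := (commute_value G h).symm

lemma sandwich : ∀ n : ℕ, ∀ d u : RaagWord V, d.length < n → ¬ CyclicBad G u →
    ∃ u' e : RaagWord V, u.Perm u' ∧ ¬ CyclicBad G u' ∧
      Red G (wInv e ++ (u' ++ e)) ∧
      wordValue G (wInv e ++ (u' ++ e)) =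
        (wordValue G d)⁻¹ * wordValue G u * wordValue G d := by
  intro n
  induction n with
  | zero => intro d u h; omega
  | succ n ih =>
    intro d u hlen hcb
    by_cases hred : Red G (wInv d ++ (u ++ d))
    · refine ⟨u, d, List.Perm.refl u, hcb, hred, ?_⟩
      rw [wordValue_append, wordValue_append, wordValue_wInv, mul_assoc]
    · rw [Red, not_not] at hred
      obtain ⟨P, x, M, S, heq, hM⟩ := hred
      rcases loc (A := wInv d) (B := u ++ d) heq with ⟨T, hD, hrest⟩ | ⟨T, hP, hrest⟩
      · -- x is inside wInv d
        rcases loc (A := T) (B := u ++ d) hrest.symm with ⟨T₂, hT, hS⟩ | ⟨T₂, hM₂, hud⟩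
        · -- the cancelling pair is inside wInv d : reduce d
          have hsd : SplitRed G (wInv d) := ⟨P, x, M, T₂, by rw [hD, hT], hM⟩
          obtain ⟨P', y, M', S', hdeq, hM'⟩ := splitRed_wInv G hsd
          have hval : wordValue G (P' ++ (M' ++ S')) = wordValue G d := by
            rw [hdeq, value_del G hM']
          have hlen2 : (P' ++ (M' ++ S')).length < n := by
            have h2 := hlen
            rw [hdeq] at h2
            simp only [List.length_append, List.length_cons] at h2 ⊢
            omega
          obtain ⟨u', e, hperm, hcb', hred', hval'⟩ := ih (P' ++ (M' ++ S')) u hlen2 hcb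
          exact ⟨u', e, hperm, hcb', hred', by rw [hval', hval]⟩
        · -- linv x is in u or in d
          have hTx : ∀ l ∈ T, lettersCommute G l.1 x.1 := fun l hl =>
            hM l (by rw [hM₂]; simp [hl])
          have hT₂x : ∀ l ∈ T₂, lettersCommute G l.1 x.1 := fun l hl =>
            hM l (by rw [hM₂]; simp [hl])
          -- d as a word: d = wInv T ++ [linv x] ++ wInv P
          have hd2 : d = wInv T ++ ([linv x] ++ wInv P) := by
            rw [← wInv_wInv d, hD]
            simp [wInv_append, wInv_cons, List.append_assoc]
          rcases loc (A := u) (B := d) hud with ⟨T₃, hu, hS₃⟩ | ⟨T₃, hT₂', hd⟩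
          · -- (b1) x in wInv d, linv x in u : rotate u
            have hcb₂ : ¬ CyclicBad G (T₂ ++ (T₃ ++ [linv x])) := by
              intro hcb2
              apply hcb
              have h1 : CyclicBad G ((T₂ ++ T₃) ++ [linv x]) := by
                simpa [List.append_assoc] using hcb2
              have h2 : CyclicBad G ([linv x] ++ (T₂ ++ T₃)) := cyclicBad_rotate G h1
              have h3 : Sim G (linv x :: (T₂ ++ T₃)) u := by
                rw [hu]
                exact bubble G T₃ (fun l hl => hT₂x l hl)
              exact sim_cyclicBad G h3 (by simpa using h2)
            have hlen3 : (wInv T ++ wInv P).length < n := by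
              have h2 := hlen
              have h4 : (wInv d).length = d.length := wInv_length d
              rw [hD] at h4
              simp only [List.length_append, List.length_cons] at h4 ⊢
              simp only [wInv_length] at h4 ⊢
              omega
            obtain ⟨u', e, hperm, hcb', hred', hval'⟩ :=
              ih (wInv T ++ wInv P) (T₂ ++ (T₃ ++ [linv x])) hlen3 hcb₂
            refine ⟨u', e, ?_, hcb', hred', ?_⟩
            · refine List.Perm.trans ?_ hperm
              rw [hu]
              exact List.Perm.append_left T₂ (List.perm_append_singleton _ _).symm
            · rw [hval']
              -- group computation
              have e_d : wordValue G d =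
                  (wordValue G T)⁻¹ * ((rgen G x)⁻¹ * (wordValue G P)⁻¹) := by
                rw [hd2, wordValue_append, wordValue_append, wordValue_singleton,
                  rgen_linv, wordValue_wInv, wordValue_wInv]
              have e_d3 : wordValue G (wInv T ++ wInv P) =
                  (wordValue G T)⁻¹ * (wordValue G P)⁻¹ := by
                rw [wordValue_append, wordValue_wInv, wordValue_wInv]
              have e_u : wordValue G u =
                  wordValue G T₂ * ((rgen G x)⁻¹ * wordValue G T₃) := by
                rw [hu, wordValue_append, wordValue_cons, rgen_linv]
              have e_u2 : wordValue G (T₂ ++ (T₃ ++ [linv x])) =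
                  wordValue G T₂ * (wordValue G T₃ * (rgen G x)⁻¹) := by
                rw [wordValue_append, wordValue_append, wordValue_singleton, rgen_linv]
              rw [e_d, e_d3, e_u, e_u2]
              have c1 : Commute (rgen G x) (wordValue G T) := commute_value_rgen G hTx
              have c2 : Commute (rgen G x) (wordValue G T₂) := commute_value_rgen G hT₂x
              simp only [mul_inv_rev, inv_inv, mul_assoc]
              rw [comm3 c1, comm3 c2, mul_inv_cancel_left, comm3 c1.inv_left.inv_right]
          · -- (b2) x in wInv d, linv x in d : shorten d
            have hT₃x : ∀ l ∈ T₃, lettersCommute G l.1 x.1 := fun l hl =>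
              hM l (by rw [hM₂, hT₂']; simp [hl])
            have hux : ∀ l ∈ u, lettersCommute G l.1 x.1 := fun l hl =>
              hM l (by rw [hM₂, hT₂']; simp [hl])
            have hlen3 : (T₃ ++ S).length < n := by
              have h2 := hlen
              rw [hd] at h2
              simp only [List.length_append, List.length_cons] at h2 ⊢
              omega
            obtain ⟨u', e, hperm, hcb', hred', hval'⟩ := ih (T₃ ++ S) u hlen3 hcb
            refine ⟨u', e, hperm, hcb', hred', ?_⟩
            rw [hval']
            have e_d : wordValue G d =
                wordValue G T₃ * ((rgen G x)⁻¹ * wordValue G S) := by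
              rw [hd, wordValue_append, wordValue_cons, rgen_linv]
            have e_d3 : wordValue G (T₃ ++ S) = wordValue G T₃ * wordValue G S := by
              rw [wordValue_append]
            rw [e_d, e_d3]
            have c3 : Commute (rgen G x) (wordValue G T₃) := commute_value_rgen G hT₃x
            have cu : Commute (rgen G x) (wordValue G u) := commute_value_rgen G hux
            simp only [mul_inv_rev, inv_inv, mul_assoc]
            rw [comm3 c3.inv_right, comm3 cu, comm3 c3, mul_inv_cancel_left]
      · -- x is in u or in d
        rcases loc (A := u) (B := d) hrest with ⟨T₂, hu, hS₂⟩ | ⟨T₂, hT', hd⟩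
        · -- x in u
          rcases loc (A := T₂) (B := d) hS₂.symm with ⟨T₃, hT₂3, hS₃⟩ | ⟨T₃, hM₃, hd₃⟩
          · -- pair inside u : contradiction
            exact absurd (splitRed_cyclicBad G ⟨T, x, M, T₃, by rw [hu, hT₂3], hM⟩) hcb
          · -- (c2) x in u, linv x in d : rotate u the other way
            have hT₂x : ∀ l ∈ T₂, lettersCommute G l.1 x.1 := fun l hl =>
              hM l (by rw [hM₃]; simp [hl])
            have hT₃x : ∀ l ∈ T₃, lettersCommute G l.1 x.1 := fun l hl =>
              hM l (by rw [hM₃]; simp [hl])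
            have hcb₂ : ¬ CyclicBad G (x :: (T ++ T₂)) := by
              intro hcb2
              apply hcb
              have h1 : CyclicBad G ((T ++ T₂) ++ [x]) := by
                have := cyclicBad_rotate G (u := [x]) (v := T ++ T₂) (by simpa using hcb2)
                exact this
              have h3 : Sim G u (T ++ (T₂ ++ [x])) := by
                rw [hu]
                refine sim_append_left G T ?_
                have := bubble G (a := T₂) (x := x) [] (fun l hl => hT₂x l hl)
                simpa using this
              exact sim_cyclicBad G (sim_symm G h3) (by simpa [List.append_assoc] using h1)
            have hlen3 : (T₃ ++ S).length < n := by
              have h2 := hlen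
              rw [hd₃] at h2
              simp only [List.length_append, List.length_cons] at h2 ⊢
              omega
            obtain ⟨u', e, hperm, hcb', hred', hval'⟩ :=
              ih (T₃ ++ S) (x :: (T ++ T₂)) hlen3 hcb₂
            refine ⟨u', e, ?_, hcb', hred', ?_⟩
            · refine List.Perm.trans ?_ hperm
              rw [hu]
              exact List.perm_middle
            · rw [hval']
              have e_d : wordValue G d =
                  wordValue G T₃ * ((rgen G x)⁻¹ * wordValue G S) := by
                rw [hd₃, wordValue_append, wordValue_cons, rgen_linv]
              have e_d3 : wordValue G (T₃ ++ S) = wordValue G T₃ * wordValue G S := by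
                rw [wordValue_append]
              have e_u : wordValue G u =
                  wordValue G T * (rgen G x * wordValue G T₂) := by
                rw [hu, wordValue_append, wordValue_cons]
              have e_u2 : wordValue G (x :: (T ++ T₂)) =
                  rgen G x * (wordValue G T * wordValue G T₂) := by
                rw [wordValue_cons, wordValue_append]
              rw [e_d, e_d3, e_u, e_u2]
              have c2 : Commute (rgen G x) (wordValue G T₂) := commute_value_rgen G hT₂x
              have c3 : Commute (rgen G x) (wordValue G T₃) := commute_value_rgen G hT₃x
              simp only [mul_inv_rev, inv_inv, mul_assoc]
              rw [comm3 c3.inv_right, comm3 c2, comm3 c3, mul_inv_cancel_left]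
        · -- pair inside d : reduce d
          have hlen2 : (T₂ ++ (M ++ S)).length < n := by
            have h2 := hlen
            rw [hd] at h2
            simp only [List.length_append, List.length_cons] at h2 ⊢
            omega
          have hval : wordValue G (T₂ ++ (M ++ S)) = wordValue G d := by
            rw [hd, value_del G hM]
          obtain ⟨u', e, hperm, hcb', hred', hval'⟩ := ih (T₂ ++ (M ++ S)) u hlen2 hcb
          exact ⟨u', e, hperm, hcb', hred', by rw [hval', hval]⟩

/-! ### Cyclic reduction of an arbitrary word, up to conjugacy -/

lemma cyclic_reduce : ∀ n : ℕ, ∀ w : RaagWord V, w.length < n →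
    ∃ u : RaagWord V, ¬ CyclicBad G u ∧ (∀ p ∈ u, p ∈ w) ∧
      ∃ h : RAAG G, wordValue G u = h⁻¹ * wordValue G w * h := by
  intro n
  induction n with
  | zero => intro w h; omega
  | succ n ih =>
    intro w hlen
    by_cases hcb : CyclicBad G w
    · obtain ⟨w₁, w₂, heq, hs⟩ := hcb
      obtain ⟨P, x, M, S, heq2, hM⟩ := hs
      have hval : wordValue G (P ++ (M ++ S)) =
          (wordValue G w₁)⁻¹ * wordValue G w * wordValue G w₁ := by
        rw [← value_del G hM, ← heq2, wordValue_append, heq, wordValue_append]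
        group
      have hlen2 : (P ++ (M ++ S)).length < n := by
        have h2 : (w₂ ++ w₁).length = w.length := by
          rw [heq]; simp only [List.length_append]; omega
        rw [heq2] at h2
        simp only [List.length_append, List.length_cons] at h2 ⊢
        omega
      obtain ⟨u, hcbu, hmem, h, hvalu⟩ := ih (P ++ (M ++ S)) hlen2
      refine ⟨u, hcbu, ?_, wordValue G w₁ * h, ?_⟩
      · intro p hp
        have h3 : p ∈ P ++ (M ++ S) := hmem p hp
        have h4 : p ∈ w₂ ++ w₁ := by
          rw [heq2]
          simp only [List.mem_append, List.mem_cons] at h3 ⊢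
          tauto
        rw [heq]
        simp only [List.mem_append] at h4 ⊢
        tauto
      · rw [hvalu, hval]
        group
    · exact ⟨w, hcb, fun p hp => hp, 1, by group⟩

/-! ### Bridges to the positional definitions -/

lemma getElem_of_eq_append {w : RaagWord V} (P R : RaagWord V) (x : V × Bool) (k : ℕ)
    (hk : k < w.length) (hw : w = P ++ x :: R) (he : k = P.length) : w[k] = x := by
  subst hw he
  rw [List.getElem_append_right (le_refl P.length)]
  simp

lemma mem_of_getElem_cons_middle (M R : List (V × Bool)) (x : V × Bool) (j : ℕ)
    (hj : j < (x :: (M ++ R)).length) (h1 : 1 ≤ j) (h2 : j ≤ M.length) :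
    (x :: (M ++ R))[j] ∈ M := by
  cases j with
  | zero => omega
  | succ m =>
    rw [List.getElem_cons_succ, List.getElem_append_left (by omega)]
    exact List.getElem_mem _

lemma mem_of_eq_append_middle {w : RaagWord V} (P M R : RaagWord V) (x : V × Bool) (k : ℕ)
    (hk : k < w.length) (hw : w = P ++ x :: (M ++ R)) (h1 : P.length < k)
    (h2 : k < P.length + 1 + M.length) : w[k] ∈ M := by
  subst hw
  rw [List.getElem_append_right (by omega : P.length ≤ k)]
  exact mem_of_getElem_cons_middle M R x _ _ (by omega) (by omega)

lemma mem_of_eq_append_left {w : RaagWord V} (A R : RaagWord V) (k : ℕ)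
    (hk : k < w.length) (hw : w = A ++ R) (h1 : k < A.length) : w[k] ∈ A := by
  subst hw
  rw [List.getElem_append_left h1]
  exact List.getElem_mem _

lemma mem_of_eq_append_right {w : RaagWord V} (D B : RaagWord V) (k : ℕ)
    (hk : k < w.length) (hw : w = D ++ B) (h1 : D.length ≤ k) : w[k] ∈ B := by
  subst hw
  rw [List.getElem_append_right h1]
  exact List.getElem_mem _

lemma hasRed_of_split {w P M S : RaagWord V} {x : V × Bool}
    (h : w = P ++ x :: (M ++ linv x :: S))
    (hM : ∀ l ∈ M, lettersCommute G l.1 x.1) : HasReduction G w := by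
  have hlen : w.length = P.length + 1 + M.length + 1 + S.length := by
    rw [h]; simp only [List.length_append, List.length_cons]; omega
  have hi : P.length < w.length := by omega
  have hj : P.length + 1 + M.length < w.length := by omega
  have e1 : w.get ⟨P.length, hi⟩ = x := by
    rw [List.get_eq_getElem]
    exact getElem_of_eq_append P (M ++ linv x :: S) x P.length (by omega) h rfl
  have e2 : w.get ⟨P.length + 1 + M.length, hj⟩ = linv x := by
    rw [List.get_eq_getElem]
    refine getElem_of_eq_append (P ++ x :: M) S (linv x) _ (by omega)
      (by rw [h]; simp) ?_
    simp only [List.length_append, List.length_cons]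
    omega
  refine ⟨P.length, P.length + 1 + M.length, hi, hj, by omega, ?_, ?_, ?_⟩
  · rw [e1, e2]; rfl
  · rw [e1, e2]; simp
  · intro k hk hik hkj
    rw [e1]
    have : w.get ⟨k, hk⟩ ∈ M := by
      rw [List.get_eq_getElem]
      exact mem_of_eq_append_middle P M (linv x :: S) x k (by omega) h hik hkj
    exact hM _ this

lemma hasCyc_of_split {w A C B : RaagWord V} {x : V × Bool}
    (h : w = A ++ linv x :: (C ++ x :: B))
    (hA : ∀ l ∈ A, lettersCommute G l.1 x.1)
    (hB : ∀ l ∈ B, lettersCommute G l.1 x.1) : HasCyclicReduction G w := by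
  have hlen : w.length = A.length + 1 + C.length + 1 + B.length := by
    rw [h]; simp only [List.length_append, List.length_cons]; omega
  have hi : A.length < w.length := by omega
  have hj : A.length + 1 + C.length < w.length := by omega
  have e1 : w.get ⟨A.length, hi⟩ = linv x := by
    rw [List.get_eq_getElem]
    exact getElem_of_eq_append A (C ++ x :: B) (linv x) A.length (by omega) h rfl
  have e2 : w.get ⟨A.length + 1 + C.length, hj⟩ = x := by
    rw [List.get_eq_getElem]
    refine getElem_of_eq_append (A ++ linv x :: C) B x _ (by omega) (by rw [h]; simp) ?_
    simp only [List.length_append, List.length_cons]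
    omega
  refine ⟨A.length, A.length + 1 + C.length, hi, hj, by omega, ?_, ?_, ?_⟩
  · rw [e1, e2]; rfl
  · rw [e1, e2]; simp
  · intro k hk hor
    rw [e1]
    rcases hor with hik | hkj
    · have : w.get ⟨k, hk⟩ ∈ A := by
        rw [List.get_eq_getElem]
        exact mem_of_eq_append_left A (linv x :: (C ++ x :: B)) k hk h hik
      have h3 := hA _ this
      simpa using h3
    · have : w.get ⟨k, hk⟩ ∈ B := by
        rw [List.get_eq_getElem]
        refine mem_of_eq_append_right (A ++ linv x :: (C ++ [x])) B k hk
          (by rw [h]; simp) ?_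
        simp only [List.length_append, List.length_cons, List.length_nil]
        omega
      have h3 := hB _ this
      simpa using h3

lemma cyclicBad_has {w : RaagWord V} (h : CyclicBad G w) :
    HasReduction G w ∨ HasCyclicReduction G w := by
  obtain ⟨w₁, w₂, rfl, hs⟩ := h
  obtain ⟨P, x, M, S, heq, hM⟩ := hs
  rcases loc (A := w₂) (B := w₁) heq with ⟨T, hw₂, hrest⟩ | ⟨T, hP, hw₁⟩
  · rcases loc (A := T) (B := w₁) hrest.symm with ⟨T₂, hT, hS⟩ | ⟨T₂, hM₂, hw₁'⟩
    · -- pair inside w₂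
      left
      refine hasRed_of_split G (P := w₁ ++ P) (M := M) (S := T₂) ?_ hM
      rw [hw₂, hT]; simp
    · -- x in w₂, linv x in w₁ : cyclic reduction
      right
      refine hasCyc_of_split G (x := x) (A := T₂) (C := S ++ P) (B := T) ?_ ?_ ?_
      · rw [hw₁', hw₂]; simp
      · intro l hl
        exact hM l (by rw [hM₂]; simp [hl])
      · intro l hl
        exact hM l (by rw [hM₂]; simp [hl])
  · -- pair inside w₁
    left
    refine hasRed_of_split G (P := T) (M := M) (S := S ++ w₂) ?_ hM
    rw [hw₁]; simp

lemma not_cyclicBad_of_cyclicallyReduced {w : RaagWord V}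
    (h : CyclicallyReduced G w) : ¬ CyclicBad G w := by
  intro hcb
  rcases cyclicBad_has G hcb with h1 | h1
  · exact h.1 h1
  · exact h.2 h1

lemma cyclicBad_outer {e u' : RaagWord V} (he : e ≠ []) :
    CyclicBad G (wInv e ++ (u' ++ e)) := by
  rcases List.eq_nil_or_concat' e with rfl | ⟨f, t, rfl⟩
  · exact absurd rfl he
  · refine ⟨[linv t], wInv f ++ (u' ++ (f ++ [t])), ?_, ?_⟩
    · rw [wInv_append]; simp
    · refine ⟨wInv f ++ (u' ++ f), t, [], [], ?_, by simp⟩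
      simp [List.append_assoc]

end RaagNF

theorem cyclicallyReduced_conjugate_mem_special_subgroup
    {V : Type*} [Fintype V] (G : SimpleGraph V) (Sg : Set V)
    (x y : RAAG G) (hx : x ∈ (raagSub G Sg).map (MulAut.conj y⁻¹).toMonoidHom)
    (w : RaagWord V) (hred : CyclicallyReduced G w)
    (hconj : ∃ z : RAAG G, wordValue G w = z⁻¹ * x * z) :
    (∀ p ∈ w, p.1 ∈ Sg) ∧ wordValue G w ∈ raagSub G Sg := by
  classical
  obtain ⟨g, hg, rfl⟩ := Subgroup.mem_map.mp hx
  obtain ⟨z, hz⟩ := hconj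
  obtain ⟨w0, hw0mem, hw0val⟩ := RaagNF.exists_word_of_mem_sub G hg
  obtain ⟨u, hcbu, humem, h, huval⟩ := RaagNF.cyclic_reduce G (w0.length + 1) w0 (by omega)
  obtain ⟨c, hc⟩ := RaagNF.exists_word G (h⁻¹ * (y * z))
  have hconjapp : (MulAut.conj y⁻¹).toMonoidHom g = y⁻¹ * g * y := by
    simp [MulAut.conj_apply]
  have hw0u : wordValue G w0 = h * wordValue G u * h⁻¹ := by rw [huval]; group
  have hkey : wordValue G w = (wordValue G c)⁻¹ * wordValue G u * wordValue G c := by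
    rw [hz, hconjapp, ← hw0val, hw0u, hc]
    group
  obtain ⟨u', e, hperm, hcb', hred', hval'⟩ :=
    RaagNF.sandwich G (c.length + 1) c u (by omega) hcbu
  have hwred : RaagNF.Red G w := fun hs =>
    RaagNF.not_cyclicBad_of_cyclicallyReduced G hred (RaagNF.splitRed_cyclicBad G hs)
  have hsim : RaagNF.Sim G w (RaagNF.wInv e ++ (u' ++ e)) :=
    RaagNF.nf_unique G hwred hred' (by rw [hval', hkey])
  have he : e = [] := by
    by_contra hne
    exact RaagNF.not_cyclicBad_of_cyclicallyReduced G hred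
      (RaagNF.sim_cyclicBad G (RaagNF.sim_symm G hsim) (RaagNF.cyclicBad_outer G hne))
  subst he
  have hsim' : RaagNF.Sim G w u' := by simpa using hsim
  have hpw : w.Perm u' := RaagNF.sim_perm G hsim'
  have hmem : ∀ p ∈ w, p.1 ∈ Sg := by
    intro p hp
    have h1 : p ∈ u' := hpw.mem_iff.mp hp
    have h2 : p ∈ u := hperm.mem_iff.mpr h1
    exact hw0mem p (humem p h2)
  exact ⟨hmem, RaagNF.value_mem_sub G hmem⟩
end

section
/- Let Σ be a subset of the vertex set of a finite simplicial graph Γ. If x ∈ A_{st(Σ)} and x is conjugate in A_Γ to an element of A_Σ, then x ∈ A_Σ. (The only elements of A_{st(Σ)} = A_Σ × A_{lk(Σ)} conjugate to elements of A_Σ are the elements of A_Σ.) -/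
open scoped commutatorElement

section Aux

variable {V : Type*} (G : SimpleGraph V)

lemma raagGen_commute {u v : V} (h : G.Adj u v) :
    Commute (raagGen G u) (raagGen G v) := by
  rw [← commutatorElement_eq_one_iff_commute]
  have hmem : ⁅FreeGroup.of u, FreeGroup.of v⁆ ∈ Subgroup.normalClosure (raagRels G) :=
    Subgroup.subset_normalClosure ⟨u, v, h, rfl⟩
  have : PresentedGroup.mk (raagRels G) ⁅FreeGroup.of u, FreeGroup.of v⁆ = 1 :=
    (QuotientGroup.eq_one_iff _).2 hmem
  simpa [raagGen, PresentedGroup.of, map_commutatorElement] using this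

/-- The retraction killing generators outside `Δ`, as a function on vertices. -/
noncomputable def retrFun (Δ : Set V) (v : V) : RAAG G :=
  letI := Classical.propDecidable
  if v ∈ Δ then raagGen G v else 1

lemma retrFun_rels (Δ : Set V) :
    ∀ r ∈ raagRels G, FreeGroup.lift (retrFun G Δ) r = 1 := by
  rintro r ⟨u, v, huv, rfl⟩
  rw [map_commutatorElement, commutatorElement_eq_one_iff_commute]
  simp only [FreeGroup.lift_apply_of, retrFun]
  split_ifs
  · exact raagGen_commute G huv
  · exact Commute.one_right _
  · exact Commute.one_left _
  · exact Commute.one_left _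

/-- The retraction endomorphism of `RAAG G` killing generators outside `Δ`. -/
noncomputable def retr (Δ : Set V) : RAAG G →* RAAG G :=
  PresentedGroup.toGroup (retrFun_rels G Δ)

lemma retr_gen (Δ : Set V) (v : V) :
    retr G Δ (raagGen G v) = retrFun G Δ v :=
  PresentedGroup.toGroup.of _

lemma retr_mem (Δ : Set V) (x : RAAG G) : retr G Δ x ∈ raagSub G Δ := by
  refine PresentedGroup.generated_by _ ((raagSub G Δ).comap (retr G Δ)) (fun j => ?_) x
  show retr G Δ (raagGen G j) ∈ raagSub G Δ
  rw [retr_gen]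
  unfold retrFun
  split_ifs with h
  · exact Subgroup.subset_closure ⟨j, h, rfl⟩
  · exact one_mem _

/-- Elements of `A_Σ` and `A_{lk Σ}` commute. -/
lemma raagSub_commute (Sg : Set V) {p q : RAAG G}
    (hp : p ∈ raagSub G Sg) (hq : q ∈ raagSub G (lkSet G Sg)) : Commute p q := by
  induction hp using Subgroup.closure_induction with
  | mem y hy =>
    induction hq using Subgroup.closure_induction with
    | mem z hz =>
      obtain ⟨u, hu, rfl⟩ := hy
      obtain ⟨w, hw, rfl⟩ := hz
      exact raagGen_commute G (hw u hu)
    | one => exact Commute.one_right _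
    | mul a b _ _ iha ihb => exact iha.mul_right ihb
    | inv a _ iha => exact iha.inv_right
  | one => exact Commute.one_left _
  | mul a b _ _ iha ihb => exact iha.mul_left ihb
  | inv a _ iha => exact iha.inv_left

lemma lk_disjoint (Sg : Set V) : ∀ v ∈ Sg, v ∉ lkSet G Sg := by
  intro v hv hlk
  exact G.irrefl (hlk v hv)

lemma retr_lk_eq_one_of_mem (Sg : Set V) {a : RAAG G} (ha : a ∈ raagSub G Sg) :
    retr G (lkSet G Sg) a = 1 := by
  induction ha using Subgroup.closure_induction with
  | mem y hy =>
    rcases hy with ⟨v, hv, rfl⟩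
    rw [retr_gen]
    unfold retrFun
    rw [if_neg (lk_disjoint G Sg v hv)]
  | one => exact map_one _
  | mul x y _ _ ihx ihy => rw [map_mul, ihx, ihy, one_mul]
  | inv x _ ihx => rw [map_inv, ihx, inv_one]

lemma decomp (Sg : Set V) {x : RAAG G} (hx : x ∈ raagSub G (stSet G Sg)) :
    x = retr G Sg x * retr G (lkSet G Sg) x := by
  induction hx using Subgroup.closure_induction with
  | mem y hy =>
    rcases hy with ⟨v, hv, rfl⟩
    rw [retr_gen, retr_gen]
    unfold retrFun
    rcases hv with hv | hv
    · rw [if_pos hv, if_neg (lk_disjoint G Sg v hv), mul_one]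
    · rw [if_pos hv, if_neg (fun h => lk_disjoint G Sg v h hv)]
      · simp
  | one => simp
  | mul y z hy hz ihy ihz =>
    have hc : Commute (retr G (lkSet G Sg) y) (retr G Sg z) :=
      raagSub_commute G Sg (retr_mem G Sg z) (retr_mem G (lkSet G Sg) y) |>.symm
    rw [map_mul, map_mul]
    conv_lhs => rw [ihy, ihz]
    rw [mul_assoc, mul_assoc, ← mul_assoc (retr G (lkSet G Sg) y), hc.eq,
      mul_assoc]
  | inv y hy ihy =>
    have hc : Commute (retr G Sg y) (retr G (lkSet G Sg) y) :=
      raagSub_commute G Sg (retr_mem G Sg y) (retr_mem G (lkSet G Sg) y)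
    rw [map_inv, map_inv, ← mul_inv_rev, ← hc.eq, ← ihy]

end Aux

theorem mem_special_subgroup_of_mem_star_and_conjugate
    {V : Type*} [Fintype V] (G : SimpleGraph V) (Sg : Set V) (x : RAAG G)
    (hx : x ∈ raagSub G (stSet G Sg))
    (hconj : ∃ z : RAAG G, ∃ a ∈ raagSub G Sg, x = z⁻¹ * a * z) :
    x ∈ raagSub G Sg := by
  obtain ⟨z, a, ha, rfl⟩ := hconj
  have hlk : retr G (lkSet G Sg) (z⁻¹ * a * z) = 1 := by
    rw [map_mul, map_mul, map_inv, retr_lk_eq_one_of_mem G Sg ha, mul_one,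
      inv_mul_cancel]
  have := decomp G Sg hx
  rw [hlk, mul_one] at this
  rw [this]
  exact retr_mem G Sg _
end

section
/- Let Γ be a finite simplicial graph, Δ a nonempty subset of its vertex set, and v, w vertices with lk(w) ⊆ st(v). If w ∈ ŝt(Δ), then v ∈ ŝt(Δ). -/
theorem mem_est_of_mem_est {V : Type*} [Fintype V] (G : SimpleGraph V)
    (Δ : Set V) (hΔ : Δ.Nonempty) (v w : V)
    (hsub : lkSet G {w} ⊆ stSet G {v}) (hw : w ∈ estSet G Δ) :
    v ∈ estSet G Δ := by
  have key : ∀ u, G.Adj w u → u = v ∨ G.Adj v u := by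
    intro u hu
    have : u ∈ stSet G {v} := hsub (by simpa [lkSet] using hu)
    rcases this with h | h
    · exact Or.inl (by simpa using h)
    · exact Or.inr (h v rfl)
  rcases hw with hw | hw
  · by_cases hv : v ∈ Δ
    · right
      intro u hu
      exact (hu v hv).symm
    · left
      intro u hu
      have hadj : G.Adj w u := (hw u hu).symm
      rcases key u hadj with h | h
      · exact absurd (h ▸ hu) hv
      · exact h.symm
  · by_cases hv : v ∈ lkSet G Δ
    · exact Or.inl hv
    · right
      intro u hu
      have hadj : G.Adj w u := (hw u hu).symm
      rcases key u hadj with h | h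
      · exact absurd (h ▸ hu) hv
      · exact h.symm
end

section
/- Let Γ be a finite simplicial graph and v a vertex. Let Θ be a connected component of the induced subgraph of Γ on V ∖ st(v), and let Σ = V ∖ (Θ ∪ st(v)). Let Δ be a nonempty subset of V with v ∉ ŝt(Δ). Then ŝt(Δ) cannot intersect both Θ and Σ nontrivially. -/
lemma mem_stv_iff {V : Type*} (G : SimpleGraph V) (v u : V) :
    u ∈ stSet G {v} ↔ u = v ∨ G.Adj v u := by
  constructor
  · rintro (h | h)
    · exact Or.inl h
    · exact Or.inr (h v rfl)
  · rintro (rfl | h)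
    · exact Or.inl rfl
    · exact Or.inr (fun w hw => hw ▸ h)

theorem est_not_meeting_both_components {V : Type*} [Fintype V] (G : SimpleGraph V)
    (v : V) (S : Set V) (hS : S = (stSet G {v})ᶜ)
    (x : ↥S) (Θ : Set V)
    (hΘ : Θ = Subtype.val '' {u : ↥S | (SimpleGraph.induce S G).Reachable x u})
    (Sg : Set V) (hSg : Sg = (Θ ∪ stSet G {v})ᶜ)
    (Δ : Set V) (hΔ : Δ.Nonempty) (hv : v ∉ estSet G Δ) :
    ¬ ((estSet G Δ ∩ Θ).Nonempty ∧ (estSet G Δ ∩ Sg).Nonempty) := by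
  rintro ⟨⟨a, haE, haΘ⟩, ⟨b, hbE, hbSg⟩⟩
  have hv1 : v ∉ lkSet G Δ := fun h => hv (Or.inl h)
  have hv2 : v ∉ lkSet G (lkSet G Δ) := fun h => hv (Or.inr h)
  -- find w in lk(Δ) not adjacent to v
  obtain ⟨w, hwlk, hwnadj⟩ : ∃ w ∈ lkSet G Δ, ¬ G.Adj w v := by
    by_contra h
    push_neg at h
    exact hv2 h
  have hwS : w ∈ S := by
    rw [hS, Set.mem_compl_iff, mem_stv_iff]
    rintro (rfl | h)
    · exact hv1 hwlk
    · exact hwnadj h.symm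
  -- find d in Δ outside st(v)
  obtain ⟨d, hdΔ, hdS⟩ : ∃ d ∈ Δ, d ∈ S := by
    by_contra h
    push_neg at h
    apply hv1
    intro u hu
    have := h u hu
    rw [hS, Set.mem_compl_iff, not_not, mem_stv_iff] at this
    rcases this with rfl | h'
    · exact absurd (hwlk u hu).symm hwnadj
    · exact h'.symm
  -- key reachability lemma
  have key : ∀ c (hc : c ∈ S), c ∈ estSet G Δ →
      (SimpleGraph.induce S G).Reachable ⟨w, hwS⟩ ⟨c, hc⟩ := by
    intro c hc hcE
    rcases hcE with hclk | hclk2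
    · -- path w - d - c
      have h1 : (SimpleGraph.induce S G).Adj ⟨w, hwS⟩ ⟨d, hdS⟩ :=
        (hwlk d hdΔ).symm
      have h2 : (SimpleGraph.induce S G).Adj ⟨d, hdS⟩ ⟨c, hc⟩ :=
        hclk d hdΔ
      exact h1.reachable.trans h2.reachable
    · have h1 : (SimpleGraph.induce S G).Adj ⟨w, hwS⟩ ⟨c, hc⟩ :=
        hclk2 w hwlk
      exact h1.reachable
  -- a ∈ Θ gives reachability from x
  rw [hΘ] at haΘ
  obtain ⟨⟨a', haS⟩, hax, rfl⟩ := haΘ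
  -- b ∈ Sg gives b ∉ Θ and b ∈ S
  rw [hSg, Set.mem_compl_iff, Set.mem_union] at hbSg
  push_neg at hbSg
  obtain ⟨hbΘ, hbst⟩ := hbSg
  have hbS : b ∈ S := by rw [hS]; exact hbst
  have hreach : (SimpleGraph.induce S G).Reachable x ⟨b, hbS⟩ :=
    hax.trans ((key _ haS haE).symm.trans (key b hbS hbE))
  apply hbΘ
  rw [hΘ]
  exact ⟨⟨b, hbS⟩, hreach, rfl⟩
end

section
/- Let Γ be a finite simplicial graph and v a vertex. Let Θ be a connected component of the induced subgraph of Γ on V ∖ st(v), and let Σ = V ∖ (Θ ∪ st(v)). Let Δ be a nonempty subset of V such that lk(Δ) intersects both Θ and Σ nontrivially. Then v ∈ lk(Δ). -/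
theorem mem_lk_of_lk_meets_both_components {V : Type*} [Fintype V] (G : SimpleGraph V)
    (v : V) (S : Set V) (hS : S = (stSet G {v})ᶜ)
    (x : ↥S) (Θ : Set V)
    (hΘ : Θ = Subtype.val '' {u : ↥S | (SimpleGraph.induce S G).Reachable x u})
    (Sg : Set V) (hSg : Sg = (Θ ∪ stSet G {v})ᶜ)
    (Δ : Set V) (hΔ : Δ.Nonempty)
    (h1 : (lkSet G Δ ∩ Θ).Nonempty) (h2 : (lkSet G Δ ∩ Sg).Nonempty) :
    v ∈ lkSet G Δ := by

  obtain ⟨a, haL, haΘ⟩ := h1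
  obtain ⟨b, hbL, hbSg⟩ := h2
  have hΘS : Θ ⊆ S := by
    rw [hΘ]; rintro u ⟨w, _, rfl⟩; exact w.2
  have hbS : b ∈ S := by
    have : b ∉ stSet G {v} := by
      rw [hSg] at hbSg; intro h; exact hbSg (Or.inr h)
    rw [hS]; exact this
  -- key: Θ is closed under adjacency within S
  have key : ∀ u ∈ Θ, ∀ w ∈ S, G.Adj u w → w ∈ Θ := by
    intro u hu w hw hadj
    rw [hΘ] at hu ⊢
    obtain ⟨u', hu', hu'eq⟩ := hu
    refine ⟨⟨w, hw⟩, ?_, rfl⟩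
    refine hu'.trans (SimpleGraph.Adj.reachable ?_)
    show G.Adj (u' : V) w
    rw [hu'eq]; exact hadj
  intro d hd
  by_contra hvd
  have hadva : G.Adj d a := haL d hd
  have hadvb : G.Adj d b := hbL d hd
  have hdv : d ≠ v := by
    rintro rfl
    have hst : a ∈ stSet G {d} := Or.inr (fun w hw => by
      rw [Set.mem_singleton_iff] at hw; subst hw; exact hadva)
    have hmem := hΘS haΘ
    rw [hS] at hmem; exact hmem hst
  have hdS : d ∈ S := by
    rw [hS]
    intro h
    rcases h with h | h
    · rw [Set.mem_singleton_iff] at h; exact hdv h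
    · exact hvd ((h v rfl).symm)
  have hdΘ : d ∈ Θ := key a haΘ d hdS hadva.symm
  have hbΘ : b ∈ Θ := key d hdΘ b hbS hadvb
  rw [hSg] at hbSg
  exact hbSg (Or.inl hbΘ)
end

section
/- Let Γ be a finite simplicial graph with vertex set V and let L be a collection of subsets of V satisfying: (a) L is closed under pairwise intersection; (b) if Δ, Σ ∈ L and lk(Δ ∩ Σ) ⊆ st(Δ), then Δ ∪ Σ ∈ L; (c) ŝt(Δ) ∈ L for every subset Δ ⊆ V; (d) lk(Δ) ∈ L for every subset Δ ⊆ V that is not a cone; (e) st(Δ) ∈ L for every Δ ∈ L; and V ∈ L. Suppose Σ ∈ L is maximal with respect to inclusion among proper members of L (i.e., Σ ≠ V and there is no T ∈ L with Σ ⊊ T ⊊ V). Then for every vertex w in the boundary ∂Σ, one has V ∖ Σ ⊆ lk(w). -/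
/-- Peeling off apexes: any finite set `S` contains a non-cone `Λ` such that every
vertex of `S \ Λ` is adjacent to all other vertices of `S`. -/
lemma peelCone {V : Type*} [Fintype V] (G : SimpleGraph V) (S : Set V) :
    ∃ Λ, Λ ⊆ S ∧ ¬ IsCone G Λ ∧ ∀ k ∈ S, k ∉ Λ → ∀ x ∈ S, x ≠ k → G.Adj k x := by
  have key : ∀ n (S : Set V), S.ncard = n →
      ∃ Λ, Λ ⊆ S ∧ ¬ IsCone G Λ ∧ ∀ k ∈ S, k ∉ Λ → ∀ x ∈ S, x ≠ k → G.Adj k x := by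
    intro n
    induction n using Nat.strong_induction_on with
    | _ n ih =>
      intro S hS
      by_cases hcone : IsCone G S
      · obtain ⟨a, haS, hadj⟩ := hcone
        have hlt : (S \ {a}).ncard < n := by
          rw [← hS]
          exact Set.ncard_diff_singleton_lt_of_mem haS (Set.toFinite S)
        obtain ⟨Λ, hsub, hnc, hk⟩ := ih _ hlt (S \ {a}) rfl
        refine ⟨Λ, fun y hy => (hsub hy).1, hnc, ?_⟩
        intro k hkS hkΛ x hxS hxk
        by_cases hka : k = a
        · subst hka
          exact hadj x hxS hxk
        · by_cases hxa : x = a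
          · subst hxa
            exact (hadj k hkS hka).symm
          · exact hk k ⟨hkS, hka⟩ hkΛ x ⟨hxS, hxa⟩ hxk
      · exact ⟨S, le_refl S, hcone, fun k hk hk' => absurd hk hk'⟩
  exact key S.ncard S rfl

theorem boundary_link_contains_complement {V : Type*} [Fintype V] (G : SimpleGraph V)
    (L : Set (Set V))
    (ha : ∀ Δ ∈ L, ∀ Sg ∈ L, Δ ∩ Sg ∈ L)
    (hb : ∀ Δ ∈ L, ∀ Sg ∈ L, lkSet G (Δ ∩ Sg) ⊆ stSet G Δ → Δ ∪ Sg ∈ L)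
    (hc : ∀ Δ : Set V, estSet G Δ ∈ L)
    (hd : ∀ Δ : Set V, ¬ IsCone G Δ → lkSet G Δ ∈ L)
    (he : ∀ Δ ∈ L, stSet G Δ ∈ L)
    (huniv : Set.univ ∈ L)
    (Sg : Set V) (hSg : Sg ∈ L) (hne : Sg ≠ Set.univ)
    (hmax : ∀ T ∈ L, Sg ⊂ T → T = Set.univ)
    (w : V) (hw : w ∈ Sg) (hbd : ¬ lkSet G {w} ⊆ Sg) :
    Sgᶜ ⊆ lkSet G {w} := by
  intro u hu
  have hun : u ∉ Sg := hu
  by_contra hadj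
  have hwu : ¬ G.Adj w u := by
    intro h
    exact hadj (fun v hv => by rw [Set.mem_singleton_iff.mp hv]; exact h)
  obtain ⟨z, hz, hzS⟩ := Set.not_subset.mp hbd
  have hwz : G.Adj w z := hz w rfl
  -- w is in the second link of itself
  have hwm : w ∈ lkSet G (lkSet G {w}) := fun v hv => (hv w rfl).symm
  have hest : estSet G {w} ∈ L := hc {w}
  -- Step 1 : Σ ∪ ŝt(w) = V
  have cond₀ : lkSet G (estSet G {w} ∩ Sg) ⊆ stSet G (estSet G {w}) := by
    intro v hv
    have hwv : G.Adj w v := hv w ⟨Or.inr hwm, hw⟩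
    exact Or.inl (Or.inl (fun y hy => by rw [Set.mem_singleton_iff.mp hy]; exact hwv))
  have hT₀ : estSet G {w} ∪ Sg ∈ L := hb _ hest Sg hSg cond₀
  have hT₀univ : estSet G {w} ∪ Sg = Set.univ := by
    apply hmax _ hT₀
    refine ⟨Set.subset_union_right, fun hcontra => hzS (hcontra (Or.inl (Or.inl hz)))⟩
  have huest : u ∈ estSet G {w} := by
    have : u ∈ estSet G {w} ∪ Sg := hT₀univ ▸ Set.mem_univ u
    rcases this with h | h
    · exact h
    · exact absurd h hun
  have hulk2 : u ∈ lkSet G (lkSet G {w}) := by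
    rcases huest with h | h
    · exact absurd h hadj
    · exact h
  -- lk(w) ⊆ lk(u)
  have hsub_lk : ∀ y, G.Adj w y → G.Adj u y := by
    intro y hy
    have hylk : y ∈ lkSet G {w} := fun t ht => by
      rw [Set.mem_singleton_iff.mp ht]; exact hy
    exact (hulk2 y hylk).symm
  -- Step 2 : peel apexes from lk(w)
  obtain ⟨Λ, hΛsub, hΛnc, hK⟩ := peelCone G (lkSet G {w})
  by_cases hLS : Λ ⊆ Sg
  · -- Case Λ ⊆ Σ : use A = Σ ∩ ŝt(w)
    have hA : Sg ∩ estSet G {w} ∈ L := ha Sg hSg _ hest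
    have hstA : stSet G (Sg ∩ estSet G {w}) ∈ L := he _ hA
    have hwA : w ∈ Sg ∩ estSet G {w} := ⟨hw, Or.inr hwm⟩
    have key : lkSet G {w} ⊆ stSet G (Sg ∩ estSet G {w}) := by
      intro x hx
      have hwx : G.Adj w x := hx w rfl
      by_cases hxS : x ∈ Sg
      · exact Or.inl ⟨hxS, Or.inl hx⟩
      · refine Or.inr (fun s hs => ?_)
        rcases hs.2 with hslk | hslk2
        · -- s ∈ lk(w): use that x is an apex (x ∉ Λ since Λ ⊆ Σ)
          have hxΛ : x ∉ Λ := fun hxΛ => hxS (hLS hxΛ)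
          exact (hK x hx hxΛ s hslk (fun hsx => hxS (hsx ▸ hs.1))).symm
        · -- s ∈ lk(lk(w))
          exact (hslk2 x hx).symm
    have cond₃ : lkSet G (stSet G (Sg ∩ estSet G {w}) ∩ Sg)
        ⊆ stSet G (stSet G (Sg ∩ estSet G {w})) := by
      intro v hv
      have hwv : G.Adj w v := hv w ⟨Or.inl hwA, hw⟩
      have hvlk : v ∈ lkSet G {w} := fun t ht => by
        rw [Set.mem_singleton_iff.mp ht]; exact hwv
      exact Or.inl (key hvlk)
    have hT₃ : stSet G (Sg ∩ estSet G {w}) ∪ Sg ∈ L := hb _ hstA Sg hSg cond₃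
    have hT₃univ : stSet G (Sg ∩ estSet G {w}) ∪ Sg = Set.univ := by
      apply hmax _ hT₃
      exact ⟨Set.subset_union_right, fun hcontra => hzS (hcontra (Or.inl (key hz)))⟩
    have hust : u ∈ stSet G (Sg ∩ estSet G {w}) := by
      have : u ∈ stSet G (Sg ∩ estSet G {w}) ∪ Sg := hT₃univ ▸ Set.mem_univ u
      rcases this with h | h
      · exact h
      · exact absurd h hun
    rcases hust with h | h
    · exact hun h.1
    · exact hwu (h w hwA)
  · -- Case Λ ⊄ Σ : use lk(Λ)
    obtain ⟨x, hxΛ, hxS⟩ := Set.not_subset.mp hLS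
    have hM₁ : lkSet G Λ ∈ L := hd Λ hΛnc
    have hwM : w ∈ lkSet G Λ := fun y hy => (hΛsub hy w rfl).symm
    have huM : u ∈ lkSet G Λ := fun y hy => (hsub_lk y (hΛsub hy w rfl)).symm
    have cond₁ : lkSet G (lkSet G Λ ∩ Sg) ⊆ stSet G (lkSet G Λ) := by
      intro v hv
      have hwv : G.Adj w v := hv w ⟨hwM, hw⟩
      have hvlk : v ∈ lkSet G {w} := fun t ht => by
        rw [Set.mem_singleton_iff.mp ht]; exact hwv
      by_cases hvΛ : v ∈ Λ
      · exact Or.inr (fun m hm => (hm v hvΛ).symm)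
      · refine Or.inl (fun y hy => ?_)
        exact (hK v hvlk hvΛ y (hΛsub hy) (fun he' => hvΛ (he' ▸ hy))).symm
    have hT₁ : lkSet G Λ ∪ Sg ∈ L := hb _ hM₁ Sg hSg cond₁
    have hT₁univ : lkSet G Λ ∪ Sg = Set.univ := by
      apply hmax _ hT₁
      exact ⟨Set.subset_union_right, fun hcontra => hun (hcontra (Or.inl huM))⟩
    -- x ∈ Λ gives a contradiction : x ∉ lk(Λ) and x ∉ Σ
    have : x ∈ lkSet G Λ ∪ Sg := hT₁univ ▸ Set.mem_univ x
    rcases this with h | h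
    · exact G.loopless.irrefl x (h x hxΛ)
    · exact hxS h
end

section
/- Let Γ be a finite simplicial graph with vertex set V and let L be a collection of subsets of V such that: (a) L is closed under pairwise intersection; (b) if Δ, Σ ∈ L and lk(Δ ∩ Σ) ⊆ st(Δ), then Δ ∪ Σ ∈ L; (c) every connected component of Γ containing at least one edge belongs to L; and V ∈ L. Suppose Γ' ∈ L is maximal with respect to inclusion among proper members of L. Then either Γ' is a union of connected components of Γ, or there exists a connected component C of Γ such that V ∖ C ⊆ Γ' and Γ' ∩ C is a nonempty proper subset of C. -/
theorem maximal_invariant_subgraph_dichotomy {V : Type*} [Fintype V]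
    (G : SimpleGraph V) (L : Set (Set V))
    (ha : ∀ Δ ∈ L, ∀ Sg ∈ L, Δ ∩ Sg ∈ L)
    (hb : ∀ Δ ∈ L, ∀ Sg ∈ L, lkSet G (Δ ∩ Sg) ⊆ stSet G Δ → Δ ∪ Sg ∈ L)
    (hc : ∀ x y : V, G.Adj x y → {u : V | G.Reachable x u} ∈ L)
    (huniv : Set.univ ∈ L)
    (Γ' : Set V) (hΓ : Γ' ∈ L) (hne : Γ' ≠ Set.univ)
    (hmax : ∀ T ∈ L, Γ' ⊂ T → T = Set.univ) :
    (∀ x ∈ Γ', ∀ y : V, G.Reachable x y → y ∈ Γ') ∨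
    ∃ x : V, {u : V | G.Reachable x u}ᶜ ⊆ Γ' ∧
      (Γ' ∩ {u : V | G.Reachable x u}).Nonempty ∧
      Γ' ∩ {u : V | G.Reachable x u} ⊂ {u : V | G.Reachable x u} := by
  by_cases h : ∀ x ∈ Γ', ∀ y : V, G.Reachable x y → y ∈ Γ'
  · exact Or.inl h
  · right
    push_neg at h
    obtain ⟨x, hx, y, hxy, hy⟩ := h
    have hC : {u : V | G.Reachable x u} ∈ L := by
      obtain ⟨w⟩ := hxy
      cases w with
      | nil => exact absurd hx hy
      | cons hadj p => exact hc x _ hadj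
    have hsub : lkSet G ({u : V | G.Reachable x u} ∩ Γ') ⊆
        stSet G {u : V | G.Reachable x u} := by
      intro u hu
      exact Or.inl (SimpleGraph.Adj.reachable
        (hu x ⟨SimpleGraph.Reachable.refl x, hx⟩))
    have hmem := hb _ hC _ hΓ hsub
    have hU : {u : V | G.Reachable x u} ∪ Γ' = Set.univ := by
      apply hmax _ hmem
      exact ⟨Set.subset_union_right, fun hcon => hy (hcon (Or.inl hxy))⟩
    refine ⟨x, ?_, ⟨x, hx, SimpleGraph.Reachable.refl x⟩, ?_⟩
    · intro u hu
      have : u ∈ {u : V | G.Reachable x u} ∪ Γ' := hU ▸ Set.mem_univ u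
      exact this.resolve_left hu
    · exact ⟨Set.inter_subset_right, fun hcon => hy (hcon hxy).1⟩
end

section
/- Let Γ be a finite simplicial graph with vertex set V that is not a join, and let L be a collection of subsets of V containing V and such that st(Δ) ∈ L for every Δ ∈ L. Suppose Γ' ∈ L is nonempty and maximal with respect to inclusion among proper members of L. Then lk(Γ') = ∅. -/
/-- A graph is a join if its vertex set can be partitioned into two nonempty sets
with every vertex of one adjacent to every vertex of the other. -/
def IsJoin {V : Type*} (G : SimpleGraph V) : Prop :=
  ∃ A B : Set V, A.Nonempty ∧ B.Nonempty ∧ A ∪ B = Set.univ ∧ A ∩ B = ∅ ∧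
    ∀ a ∈ A, ∀ b ∈ B, G.Adj a b

theorem lk_of_maximal_eq_empty {V : Type*} [Fintype V] (G : SimpleGraph V)
    (hjoin : ¬ IsJoin G)
    (L : Set (Set V)) (huniv : Set.univ ∈ L)
    (hst : ∀ Δ ∈ L, stSet G Δ ∈ L)
    (Γ' : Set V) (hΓ : Γ' ∈ L) (hΓne : Γ'.Nonempty) (hne : Γ' ≠ Set.univ)
    (hmax : ∀ T ∈ L, Γ' ⊂ T → T = Set.univ) :
    lkSet G Γ' = ∅ := by
  by_contra h
  obtain ⟨b, hb⟩ := Set.nonempty_iff_ne_empty.mpr h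
  -- lk(Γ') is disjoint from Γ'
  have hdisj : Γ' ∩ lkSet G Γ' = ∅ := by
    ext x
    simp only [Set.mem_inter_iff, Set.mem_empty_iff_false, iff_false, not_and]
    intro hx hxl
    exact G.loopless.irrefl x (hxl x hx)
  have hbnot : b ∉ Γ' := fun hbΓ => G.loopless.irrefl b (hb b hbΓ)
  have hsub : Γ' ⊂ stSet G Γ' := by
    constructor
    · exact Set.subset_union_left
    · intro hsup
      exact hbnot (hsup (Set.mem_union_right _ hb))
  have hunivst : stSet G Γ' = Set.univ := hmax _ (hst _ hΓ) hsub
  exact hjoin ⟨Γ', lkSet G Γ', hΓne, ⟨b, hb⟩, hunivst, hdisj,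
    fun a ha b' hb' => hb' a ha⟩
end

section
/- Let Γ be a finite simplicial graph, and let s be a vertex such that some vertex u ≠ s is not adjacent to s. Let n ≥ 1 be an integer, and let h₁, h₂ be automorphisms of A_Γ with hᵢ(s) = s and hᵢ(A_{lk(s)}) = A_{lk(s)} for i = 1, 2, such that h₂ = c(sˡ t) ∘ h₁ for some integer l and some t ∈ A_{lk(s)}. Suppose that for i = 1, 2 one has hᵢⁿ = c(s^{Kᵢ} tᵢ) for integers Kᵢ and elements tᵢ ∈ A_{lk(s)}. Then K₂ ≡ K₁ (mod n); in fact K₂ = K₁ + n·l. -/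
open scoped commutatorElement

lemma aux_addRight_zpow_apply (k x : ℤ) : ((Equiv.addRight (1:ℤ))^k) x = x + k := by
  induction k using Int.induction_on with
  | zero => simp
  | succ m ih => rw [zpow_add, zpow_one]; simp [ih]; ring
  | pred m ih => rw [sub_eq_add_neg, zpow_add]; simp [ih]; ring

lemma aux_conj_comm_aut {G : Type*} [Group G] (h : MulAut G) (x : G) :
    h * MulAut.conj x = MulAut.conj (h x) * h := by
  ext g; simp [mul_assoc]

lemma aux_raag_commute {V : Type*} (G : SimpleGraph V) {v w : V} (h : G.Adj v w) :
    Commute (raagGen G v) (raagGen G w) := by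
  have hmem : ⁅FreeGroup.of v, FreeGroup.of w⁆ ∈ Subgroup.normalClosure (raagRels G) :=
    Subgroup.subset_normalClosure ⟨v, w, h, rfl⟩
  have h1 : (PresentedGroup.mk (raagRels G) ⁅FreeGroup.of v, FreeGroup.of w⁆ : RAAG G) = 1 :=
    (QuotientGroup.eq_one_iff _).2 hmem
  rw [map_commutatorElement] at h1
  exact commutatorElement_eq_one_iff_commute.mp h1

theorem rotation_number_well_defined {V : Type*} [Fintype V] (G : SimpleGraph V)
    (s u : V) (hu : u ≠ s) (huadj : ¬ G.Adj u s)
    (n : ℕ) (hn : 1 ≤ n)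
    (h₁ h₂ : MulAut (RAAG G))
    (hs1 : h₁ (raagGen G s) = raagGen G s)
    (hs2 : h₂ (raagGen G s) = raagGen G s)
    (hl1 : (raagSub G (lkSet G {s})).map h₁.toMonoidHom = raagSub G (lkSet G {s}))
    (hl2 : (raagSub G (lkSet G {s})).map h₂.toMonoidHom = raagSub G (lkSet G {s}))
    (l : ℤ) (t : RAAG G) (ht : t ∈ raagSub G (lkSet G {s}))
    (hcomp : h₂ = MulAut.conj (raagGen G s ^ l * t) * h₁)
    (K₁ K₂ : ℤ) (t₁ t₂ : RAAG G)
    (ht₁ : t₁ ∈ raagSub G (lkSet G {s}))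
    (ht₂ : t₂ ∈ raagSub G (lkSet G {s}))
    (hpow1 : h₁ ^ n = MulAut.conj (raagGen G s ^ K₁ * t₁))
    (hpow2 : h₂ ^ n = MulAut.conj (raagGen G s ^ K₂ * t₂)) :
    K₂ = K₁ + (n : ℤ) * l := by
  classical
  set L := raagSub G (lkSet G {s}) with hLdef
  have hadj_of_mem : ∀ v ∈ lkSet G {s}, G.Adj s v := by
    intro v hv; exact hv s (Set.mem_singleton s)
  -- s commutes with everything in L
  have hcomm : ∀ x ∈ L, Commute (raagGen G s) x := by
    have hle : L ≤ Subgroup.centralizer {raagGen G s} := by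
      rw [hLdef, raagSub]
      refine (Subgroup.closure_le _).2 ?_
      rintro _ ⟨v, hv, rfl⟩
      rw [SetLike.mem_coe, Subgroup.mem_centralizer_iff]
      rintro g hg
      rw [Set.mem_singleton_iff] at hg
      subst hg
      exact (aux_raag_commute G (hadj_of_mem v hv)).eq
    intro x hx
    exact (Subgroup.mem_centralizer_iff.1 (hle hx) _ (Set.mem_singleton _))
  -- h₁ preserves L
  have hpres : ∀ x ∈ L, h₁ x ∈ L := by
    intro x hx
    have : h₁ x ∈ L.map h₁.toMonoidHom := ⟨x, hx, rfl⟩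
    rwa [hl1] at this
  -- main induction
  have claim : ∀ k : ℕ, ∃ T ∈ L, h₂ ^ k = MulAut.conj (raagGen G s ^ ((k:ℤ)*l) * T) * h₁ ^ k := by
    intro k
    induction k with
    | zero => exact ⟨1, one_mem L, by simp⟩
    | succ k ih =>
      obtain ⟨T, hT, hk⟩ := ih
      refine ⟨t * h₁ T, mul_mem ht (hpres T hT), ?_⟩
      have hcast : ((k+1:ℕ):ℤ) * l = ((k:ℤ)+1)*l := by push_cast; ring
      have himg : h₁ (raagGen G s ^ ((k:ℤ)*l) * T) = raagGen G s ^ ((k:ℤ)*l) * h₁ T := by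
        rw [map_mul, map_zpow, hs1]
      have hc : Commute (raagGen G s ^ ((k:ℤ)*l)) t := (hcomm t ht).zpow_left _
      have hrearr : raagGen G s ^ l * t * (raagGen G s ^ ((k:ℤ)*l) * h₁ T)
          = raagGen G s ^ (((k:ℤ)+1)*l) * (t * h₁ T) := by
        calc raagGen G s ^ l * t * (raagGen G s ^ ((k:ℤ)*l) * h₁ T)
            = raagGen G s ^ l * (t * raagGen G s ^ ((k:ℤ)*l)) * h₁ T := by group
          _ = raagGen G s ^ l * (raagGen G s ^ ((k:ℤ)*l) * t) * h₁ T := by rw [hc.symm.eq]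
          _ = (raagGen G s ^ l * raagGen G s ^ ((k:ℤ)*l)) * (t * h₁ T) := by group
          _ = raagGen G s ^ (((k:ℤ)+1)*l) * (t * h₁ T) := by
              rw [← zpow_add]; ring_nf
      rw [hcast, pow_succ' h₂ k, hk, hcomp]
      calc MulAut.conj (raagGen G s ^ l * t) * h₁ *
              (MulAut.conj (raagGen G s ^ ((k:ℤ)*l) * T) * h₁ ^ k)
          = MulAut.conj (raagGen G s ^ l * t) *
              (h₁ * MulAut.conj (raagGen G s ^ ((k:ℤ)*l) * T)) * h₁ ^ k := by group
        _ = MulAut.conj (raagGen G s ^ l * t) *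
              (MulAut.conj (h₁ (raagGen G s ^ ((k:ℤ)*l) * T)) * h₁) * h₁ ^ k := by
            rw [aux_conj_comm_aut]
        _ = (MulAut.conj (raagGen G s ^ l * t) *
              MulAut.conj (raagGen G s ^ ((k:ℤ)*l) * h₁ T)) * (h₁ * h₁ ^ k) := by
            rw [himg]; group
        _ = MulAut.conj ((raagGen G s ^ l * t) * (raagGen G s ^ ((k:ℤ)*l) * h₁ T)) *
              (h₁ * h₁ ^ k) := by rw [← map_mul]
        _ = MulAut.conj (raagGen G s ^ (((k:ℤ)+1)*l) * (t * h₁ T)) * h₁ ^ (k+1) := by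
            rw [hrearr, ← pow_succ']
  obtain ⟨T, hT, hkn⟩ := claim n
  -- the homomorphism ψ to Perm ℤ
  set a : Equiv.Perm ℤ := Equiv.addRight (1:ℤ) with ha
  set b : Equiv.Perm ℤ := Equiv.neg ℤ with hb
  set f : V → Equiv.Perm ℤ := fun v => if v = s then a else if v = u then b else 1 with hf
  have hrel : ∀ r ∈ raagRels G, FreeGroup.lift f r = 1 := by
    rintro r ⟨x, y, hxy, rfl⟩
    rw [map_commutatorElement]
    refine commutatorElement_eq_one_iff_commute.2 ?_
    simp only [FreeGroup.lift_apply_of]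
    have hone : f x = 1 ∨ f y = 1 := by
      by_cases hx : x = s
      · right
        have hys : y ≠ s := by intro h; rw [hx, h] at hxy; exact G.irrefl hxy
        have hyu : y ≠ u := by intro h; rw [hx, h] at hxy; exact huadj hxy.symm
        simp [hf, hys, hyu]
      · by_cases hxu : x = u
        · right
          have hys : y ≠ s := by intro h; rw [hxu, h] at hxy; exact huadj hxy
          have hyu : y ≠ u := by intro h; rw [hxu, h] at hxy; exact G.irrefl hxy
          simp [hf, hys, hyu]
        · left; simp [hf, hx, hxu]
    rcases hone with h | h
    · rw [h]; exact Commute.one_left _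
    · rw [h]; exact Commute.one_right _
  set ψ : RAAG G →* Equiv.Perm ℤ := PresentedGroup.toGroup hrel with hψ
  have ψof : ∀ v : V, ψ (raagGen G v) = f v := fun v => PresentedGroup.toGroup.of hrel
  have ψs : ψ (raagGen G s) = a := by rw [ψof]; simp [hf]
  have ψu : ψ (raagGen G u) = b := by rw [ψof]; simp [hf, hu]
  have ψL : ∀ x ∈ L, ψ x = 1 := by
    have hle : L ≤ ψ.ker := by
      rw [hLdef, raagSub]
      refine (Subgroup.closure_le _).2 ?_
      rintro _ ⟨v, hv, rfl⟩
      have hadj := hadj_of_mem v hv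
      have hvs : v ≠ s := by intro h; rw [h] at hadj; exact G.irrefl hadj
      have hvu : v ≠ u := by intro h; rw [h] at hadj; exact huadj hadj.symm
      rw [SetLike.mem_coe, MonoidHom.mem_ker, ψof]
      simp [hf, hvs, hvu]
    intro x hx; exact hle hx
  -- conjugation equality
  have heq : MulAut.conj (raagGen G s ^ K₂ * t₂)
      = MulAut.conj ((raagGen G s ^ ((n:ℤ)*l) * T) * (raagGen G s ^ K₁ * t₁)) := by
    calc MulAut.conj (raagGen G s ^ K₂ * t₂) = h₂ ^ n := hpow2.symm
      _ = MulAut.conj (raagGen G s ^ ((n:ℤ)*l) * T) * h₁ ^ n := hkn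
      _ = MulAut.conj (raagGen G s ^ ((n:ℤ)*l) * T) * MulAut.conj (raagGen G s ^ K₁ * t₁) := by
          rw [hpow1]
      _ = MulAut.conj ((raagGen G s ^ ((n:ℤ)*l) * T) * (raagGen G s ^ K₁ * t₁)) :=
          (map_mul _ _ _).symm
  have key := DFunLike.congr_fun heq (raagGen G u)
  simp only [MulAut.conj_apply] at key
  have key2 := congrArg ψ key
  simp only [map_mul, map_inv, map_zpow, ψs, ψu, ψL t₂ ht₂, ψL T hT, ψL t₁ ht₁,
    mul_one, one_mul] at key2
  have key3 := congrArg (fun (e : Equiv.Perm ℤ) => e 0) key2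
  simp only [← zpow_neg, mul_inv_rev, ← zpow_add, Equiv.Perm.mul_apply,
    ha, hb, aux_addRight_zpow_apply, Equiv.neg_apply] at key3
  have hne : (n:ℤ) * l + K₁ = K₁ + (n:ℤ) * l := by ring
  omega
end
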